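/- arXiv:2205.09804 — 9 statements merged into one kernel-verified Lean document; each statement's English description precedes it below -/
import Mathlib

section
/- Fix integers r ≥ 1 and t ≥ 1, and let f_r(z) = Σ_{i=1}^r (−1)^{i+1}(z−1)^i/i be the degree-r Taylor polynomial of ln z at z = 1. Then there exists a real polynomial P of degree at most r such that for every ρ ∈ (0,1], the series Σ_{ℓ=t}^∞ C(ℓ−1, t−1)·ρ^t·(1−ρ)^{ℓ−t}·f_r(ℓρ/t) converges and equals P(ρ). In other words, h_{t,r}(ρ) := E_{Z ~ NB(t,ρ)}[f_r(Zρ/t)] is a polynomial in ρ of degree at most r. -/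
/-- The degree-`r` Taylor polynomial of `ln z` centered at `1`:
`f_r(z) = ∑_{i=1}^r (−1)^{i+1} (z−1)^i / i`. -/
noncomputable def taylorLog (r : ℕ) (z : ℝ) : ℝ :=
  ∑ i ∈ Finset.Icc 1 r, (-1 : ℝ) ^ (i + 1) / (i : ℝ) * (z - 1) ^ i

/-- The negative binomial pmf `NB(t,p)` at `ℓ`:
`nb_{t,p}(ℓ) = C(ℓ−1, t−1) · p^t · (1−p)^{ℓ−t}`. -/
noncomputable def nbPMF (t : ℕ) (p : ℝ) (ℓ : ℕ) : ℝ :=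
  ((ℓ - 1).choose (t - 1) : ℝ) * p ^ t * (1 - p) ^ (ℓ - t)

open Finset Polynomial

/-- Combinatorial identity: `C(m−1,t−1)·m^{(j)} = t^{(j)}·C(m+j−1, t+j−1)`. -/
lemma key_nat (t : ℕ) (ht : 1 ≤ t) (j : ℕ) : ∀ m, t ≤ m →
    (m-1).choose (t-1) * (ascPochhammer ℕ j).eval m
      = (ascPochhammer ℕ j).eval t * (m + j - 1).choose (t + j - 1) := by
  induction j with
  | zero => intro m hm; simp
  | succ j ih =>
    intro m hm
    rw [ascPochhammer_succ_eval, ascPochhammer_succ_eval, ← mul_assoc, ih m hm]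
    have h1 : m + j = (m + j - 1) + 1 := by omega
    have h2 : t + j = (t + j - 1) + 1 := by omega
    have key := Nat.add_one_mul_choose_eq (m + j - 1) (t + j - 1)
    rw [← h1, ← h2] at key
    have goal : (m + j) * (m + j - 1).choose (t + j - 1)
        = (m + (j+1) - 1).choose (t + (j+1) - 1) * (t + j) := by
      rw [key]; congr 2 <;> omega
    calc (ascPochhammer ℕ j).eval t * (m + j - 1).choose (t + j - 1) * (m + j)
        = (ascPochhammer ℕ j).eval t * ((m + j) * (m + j - 1).choose (t + j - 1)) := by ring
      _ = (ascPochhammer ℕ j).eval t * ((m + (j+1) - 1).choose (t + (j+1) - 1) * (t + j)) := by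
          rw [goal]
      _ = (ascPochhammer ℕ j).eval t * (t + j) * (m + (j+1) - 1).choose (t + (j+1) - 1) := by
          ring

/-- The NB expectation of the rising factorial `Z^{(j)}` equals `t^{(j)}/ρ^j`. -/
lemma hasSum_nb_asc (t : ℕ) (ht : 1 ≤ t) {ρ : ℝ} (hρ : ρ ∈ Set.Ioc (0:ℝ) 1) (j : ℕ) :
    HasSum (fun n : ℕ => nbPMF t ρ (t + n) * (((ascPochhammer ℕ j).eval (t + n) : ℕ) : ℝ))
      ((((ascPochhammer ℕ j).eval t : ℕ) : ℝ) / ρ ^ j) := by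
  obtain ⟨hρ0, hρ1⟩ := hρ
  have hq : ‖(1 - ρ)‖ < 1 := by rw [Real.norm_eq_abs, abs_lt]; constructor <;> linarith
  have base := (hasSum_choose_mul_geometric_of_norm_lt_one (𝕜 := ℝ) (t + j - 1) hq).mul_left
    ((((ascPochhammer ℕ j).eval t : ℕ) : ℝ) * ρ ^ t)
  have hfun : ∀ n : ℕ, (((ascPochhammer ℕ j).eval t : ℕ) : ℝ) * ρ ^ t *
      (((n + (t + j - 1)).choose (t + j - 1) : ℝ) * (1 - ρ) ^ n)
      = nbPMF t ρ (t + n) * (((ascPochhammer ℕ j).eval (t + n) : ℕ) : ℝ) := by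
    intro n
    have hid := key_nat t ht j (t + n) (by omega)
    have hcast : (((t + n - 1).choose (t - 1) : ℕ) : ℝ) * (((ascPochhammer ℕ j).eval (t + n) : ℕ) : ℝ)
        = (((ascPochhammer ℕ j).eval t : ℕ) : ℝ) * (((t + n + j - 1).choose (t + j - 1) : ℕ) : ℝ) := by
      exact_mod_cast congrArg (Nat.cast : ℕ → ℝ) hid
    have h3 : n + (t + j - 1) = t + n + j - 1 := by omega
    have h4 : t + n - t = n := by omega
    rw [h3]
    unfold nbPMF
    rw [h4]
    calc (((ascPochhammer ℕ j).eval t : ℕ) : ℝ) * ρ ^ t *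
          ((((t + n + j - 1).choose (t + j - 1) : ℕ) : ℝ) * (1 - ρ) ^ n)
        = ((((ascPochhammer ℕ j).eval t : ℕ) : ℝ) * (((t + n + j - 1).choose (t + j - 1) : ℕ) : ℝ))
          * ρ ^ t * (1 - ρ) ^ n := by ring
      _ = ((((t + n - 1).choose (t - 1) : ℕ) : ℝ) * (((ascPochhammer ℕ j).eval (t + n) : ℕ) : ℝ))
          * ρ ^ t * (1 - ρ) ^ n := by rw [hcast]
      _ = _ := by ring
  have hsumval : (((ascPochhammer ℕ j).eval t : ℕ) : ℝ) * ρ ^ t * (1 / (1 - (1 - ρ)) ^ (t + j - 1 + 1))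
      = (((ascPochhammer ℕ j).eval t : ℕ) : ℝ) / ρ ^ j := by
    have h6 : 1 - (1 - ρ) = ρ := by ring
    rw [h6]
    have h5 : t + j - 1 + 1 = t + j := by omega
    rw [h5, pow_add]
    have hρt : ρ ^ t ≠ 0 := pow_ne_zero _ (ne_of_gt hρ0)
    have hρj : ρ ^ j ≠ 0 := pow_ne_zero _ (ne_of_gt hρ0)
    field_simp
  rw [hsumval, funext hfun] at base
  exact base

/-- Every polynomial of degree `≤ m` is a linear combination of
`ascPochhammer` polynomials of index `≤ m`. -/
lemma monomial_asc (m : ℕ) : ∀ p : ℝ[X], p.natDegree ≤ m → ∃ a : ℕ → ℝ,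
    ∀ x : ℝ, p.eval x = ∑ j ∈ range (m + 1), a j * (ascPochhammer ℝ j).eval x := by
  induction m with
  | zero =>
    intro p hp
    refine ⟨fun _ => p.coeff 0, fun x => ?_⟩
    rw [Polynomial.eq_C_of_natDegree_le_zero hp]
    simp
  | succ m ih =>
    intro p hp
    set c := p.coeff (m + 1) with hc
    set q := p - C c * ascPochhammer ℝ (m + 1) with hq
    have hmonic := monic_ascPochhammer (S := ℝ) (m + 1)
    have hdeg : (ascPochhammer ℝ (m + 1)).natDegree = m + 1 := ascPochhammer_natDegree _ _
    have hqdeg : q.natDegree ≤ m := by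
      rw [Polynomial.natDegree_le_iff_coeff_eq_zero]
      intro k hk
      rw [hq]
      simp only [Polynomial.coeff_sub, Polynomial.coeff_C_mul]
      rcases eq_or_lt_of_le (Nat.succ_le_of_lt hk) with h | h
      · rw [← h]
        have hlc : (ascPochhammer ℝ (m + 1)).coeff (m + 1) = 1 := by
          have := hmonic.leadingCoeff
          rwa [Polynomial.leadingCoeff, hdeg] at this
        rw [hlc, mul_one, sub_eq_zero]
      · have h1 : p.coeff k = 0 := Polynomial.coeff_eq_zero_of_natDegree_lt (lt_of_le_of_lt hp h)
        have h2 : (ascPochhammer ℝ (m + 1)).coeff k = 0 :=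
          Polynomial.coeff_eq_zero_of_natDegree_lt (by rw [hdeg]; exact h)
        rw [h1, h2, mul_zero, sub_zero]
    obtain ⟨a, ha⟩ := ih q hqdeg
    refine ⟨fun j => if j = m + 1 then c else a j, fun x => ?_⟩
    rw [Finset.sum_range_succ]
    have hpq : p.eval x = q.eval x + c * (ascPochhammer ℝ (m + 1)).eval x := by
      rw [hq]; simp
    rw [hpq, ha x]
    simp only [if_pos rfl]
    congr 1
    apply Finset.sum_congr rfl
    intro j hj
    rw [Finset.mem_range] at hj
    rw [if_neg (by omega)]

/-- Coefficients of `taylorLog r (xρ/t)` as a polynomial in `ρ·x`. -/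
noncomputable def Ecoef (r t : ℕ) (m : ℕ) : ℝ :=
  ∑ i ∈ Finset.Icc 1 r,
    (-1 : ℝ) ^ (i + 1) / (i : ℝ) * ((-1) ^ (m + i) * (i.choose m : ℝ) / (t:ℝ)^m)

lemma taylorLog_expand (r t : ℕ) (x ρ : ℝ) :
    taylorLog r (x * ρ / t) = ∑ m ∈ range (r + 1), Ecoef r t m * (ρ ^ m * x ^ m) := by
  unfold taylorLog Ecoef
  have step1 : ∀ i ∈ Icc 1 r, (x * ρ / t - 1 : ℝ) ^ i
      = ∑ m ∈ range (r + 1), (-1 : ℝ) ^ (m + i) * (x * ρ / t) ^ m * (i.choose m : ℝ) := by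
    intro i hi
    rw [Finset.mem_Icc] at hi
    rw [sub_pow]
    rw [← Finset.sum_subset (Finset.range_subset_range.2 (by omega : i + 1 ≤ r + 1))]
    · apply Finset.sum_congr rfl
      intro m _
      simp [one_pow]
    · intro m _ hm
      rw [Finset.mem_range, not_lt] at hm
      have : i.choose m = 0 := Nat.choose_eq_zero_of_lt (by omega)
      simp [this]
  calc ∑ i ∈ Icc 1 r, (-1:ℝ)^(i+1)/(i:ℝ) * (x * ρ / t - 1) ^ i
      = ∑ i ∈ Icc 1 r, ∑ m ∈ range (r + 1),
          (-1:ℝ)^(i+1)/(i:ℝ) * ((-1:ℝ)^(m+i) * (x * ρ / t)^m * (i.choose m : ℝ)) := by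
        apply Finset.sum_congr rfl
        intro i hi
        rw [step1 i hi, Finset.mul_sum]
    _ = ∑ m ∈ range (r + 1), ∑ i ∈ Icc 1 r,
          (-1:ℝ)^(i+1)/(i:ℝ) * ((-1:ℝ)^(m+i) * (x * ρ / t)^m * (i.choose m : ℝ)) :=
        Finset.sum_comm
    _ = _ := by
        apply Finset.sum_congr rfl
        intro m _
        rw [Finset.sum_mul]
        apply Finset.sum_congr rfl
        intro i _
        rw [div_pow, mul_pow]
        ring

/-- For `r, t ≥ 1`, there is a real polynomial `P` of degree at most `r`
such that for all `ρ ∈ (0,1]`, the series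
`∑_{ℓ=t}^∞ C(ℓ−1,t−1) ρ^t (1−ρ)^{ℓ−t} f_r(ℓρ/t)` converges and equals `P(ρ)`;
i.e. `h_{t,r}(ρ) = E_{Z ~ NB(t,ρ)}[f_r(Zρ/t)]` is a polynomial of degree at most `r`. -/
theorem nb_taylor_expectation_is_polynomial (r t : ℕ) (hr : 1 ≤ r) (ht : 1 ≤ t) :
    ∃ P : Polynomial ℝ, P.natDegree ≤ r ∧
      ∀ ρ ∈ Set.Ioc (0 : ℝ) 1,
        Summable (fun n : ℕ =>
          nbPMF t ρ (t + n) * taylorLog r (((t + n : ℕ) : ℝ) * ρ / (t : ℝ))) ∧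
        (∑' n : ℕ, nbPMF t ρ (t + n) * taylorLog r (((t + n : ℕ) : ℝ) * ρ / (t : ℝ)))
          = P.eval ρ := by
  have hA : ∀ m : ℕ, ∃ a : ℕ → ℝ,
      ∀ x : ℝ, x ^ m = ∑ j ∈ range (m + 1), a j * (ascPochhammer ℝ j).eval x := by
    intro m
    obtain ⟨a, ha⟩ := monomial_asc m (X ^ m) (by simp [Polynomial.natDegree_X_pow])
    exact ⟨a, fun x => by simpa using ha x⟩
  choose A hA using hA
  set P : ℝ[X] := ∑ m ∈ range (r + 1), ∑ j ∈ range (m + 1),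
    C (Ecoef r t m * A m j * (((ascPochhammer ℕ j).eval t : ℕ) : ℝ)) * X ^ (m - j) with hP
  refine ⟨P, ?_, ?_⟩
  · apply Polynomial.natDegree_sum_le_of_forall_le
    intro m hm
    apply Polynomial.natDegree_sum_le_of_forall_le
    intro j _
    rw [Finset.mem_range] at hm
    exact le_trans (Polynomial.natDegree_C_mul_X_pow_le _ _) (by omega)
  · intro ρ hρ
    have hρ0 : (0:ℝ) < ρ := hρ.1
    set F : ℕ → ℕ → ℕ → ℝ := fun m j n => (Ecoef r t m * A m j * ρ ^ m) *
      (nbPMF t ρ (t + n) * (((ascPochhammer ℕ j).eval (t + n) : ℕ) : ℝ)) with hF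
    have hTotal : HasSum (fun n => ∑ m ∈ range (r + 1), ∑ j ∈ range (m + 1), F m j n)
        (∑ m ∈ range (r + 1), ∑ j ∈ range (m + 1), (Ecoef r t m * A m j * ρ ^ m) *
          ((((ascPochhammer ℕ j).eval t : ℕ) : ℝ) / ρ ^ j)) := by
      apply hasSum_sum
      intro m _
      apply hasSum_sum
      intro j _
      exact (hasSum_nb_asc t ht hρ j).mul_left _
    have hfun : ∀ n : ℕ,
        nbPMF t ρ (t + n) * taylorLog r (((t + n : ℕ) : ℝ) * ρ / (t : ℝ))
          = ∑ m ∈ range (r + 1), ∑ j ∈ range (m + 1), F m j n := by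
      intro n
      rw [taylorLog_expand r t (((t + n : ℕ) : ℝ)) ρ, Finset.mul_sum]
      apply Finset.sum_congr rfl
      intro m _
      rw [hA m (((t + n : ℕ) : ℝ)), Finset.mul_sum, Finset.mul_sum, Finset.mul_sum]
      apply Finset.sum_congr rfl
      intro j _
      simp only [hF]
      have hcast : (((ascPochhammer ℕ j).eval (t + n) : ℕ) : ℝ)
          = (ascPochhammer ℝ j).eval (((t + n : ℕ) : ℝ)) := by
        push_cast
        rfl
      rw [hcast]
      ring
    have heq : (fun n : ℕ =>
        nbPMF t ρ (t + n) * taylorLog r (((t + n : ℕ) : ℝ) * ρ / (t : ℝ)))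
        = fun n => ∑ m ∈ range (r + 1), ∑ j ∈ range (m + 1), F m j n := funext hfun
    constructor
    · rw [heq]; exact hTotal.summable
    · rw [heq, hTotal.tsum_eq, hP]
      simp only [Polynomial.eval_finset_sum, Polynomial.eval_mul, Polynomial.eval_C,
        Polynomial.eval_pow, Polynomial.eval_X]
      apply Finset.sum_congr rfl
      intro m _
      apply Finset.sum_congr rfl
      intro j hj
      rw [Finset.mem_range] at hj
      rw [pow_sub₀ ρ (ne_of_gt hρ0) (by omega : j ≤ m)]
      ring
end

section
/- There exists a universal constant c > 0 with the following property. For all integers r ≥ 1 and t ≥ 1 with r² ≤ t, let P(ρ) = Σ_{i=0}^r a_i ρ^i be the polynomial of degree at most r satisfying P(ρ) = Σ_{ℓ=t}^∞ C(ℓ−1,t−1)ρ^t(1−ρ)^{ℓ−t}·f_r(ℓρ/t) for all ρ ∈ (0,1]. Then Σ_{i=0}^r |a_i| ≤ c. In particular, the linear function g with g(ρ, ρ², ..., ρ^r) = P(ρ) satisfies |g(b)| ≤ c for every b ∈ {0,1}^r. -/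
open Polynomial Finset

/-- ℓ¹ norm of coefficients -/
noncomputable def pnorm (p : Polynomial ℝ) : ℝ :=
  ∑ i ∈ Finset.range (p.natDegree + 1), |p.coeff i|

lemma pnorm_eq_sum {p : Polynomial ℝ} {m : ℕ} (h : p.natDegree < m) :
    pnorm p = ∑ i ∈ Finset.range m, |p.coeff i| := by
  unfold pnorm
  apply Finset.sum_subset (Finset.range_subset_range.2 h)
  intro i hi hni
  simp only [Finset.mem_range, not_lt] at hni
  rw [p.coeff_eq_zero_of_natDegree_lt (by omega), abs_zero]

lemma pnorm_nonneg (p : Polynomial ℝ) : 0 ≤ pnorm p :=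
  Finset.sum_nonneg fun _ _ => abs_nonneg _

lemma pnorm_zero : pnorm (0 : Polynomial ℝ) = 0 := by simp [pnorm]

lemma pnorm_one : pnorm (1 : Polynomial ℝ) = 1 := by simp [pnorm]

lemma sum_abs_coeff_le_pnorm (p : Polynomial ℝ) (m : ℕ) :
    ∑ i ∈ Finset.range m, |p.coeff i| ≤ pnorm p := by
  rcases le_or_gt m (p.natDegree + 1) with h | h
  · unfold pnorm
    exact Finset.sum_le_sum_of_subset_of_nonneg (Finset.range_subset_range.2 h)
      (fun _ _ _ => abs_nonneg _)
  · rw [pnorm_eq_sum (show p.natDegree < m by omega)]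

lemma pnorm_add_le (p q : Polynomial ℝ) : pnorm (p + q) ≤ pnorm p + pnorm q := by
  set m := max p.natDegree q.natDegree + 1 with hm
  have hp : p.natDegree < m := by omega
  have hq : q.natDegree < m := by omega
  have hpq : (p + q).natDegree < m :=
    lt_of_le_of_lt (natDegree_add_le p q) (by omega)
  rw [pnorm_eq_sum hp, pnorm_eq_sum hq, pnorm_eq_sum hpq, ← Finset.sum_add_distrib]
  apply Finset.sum_le_sum
  intro i _
  rw [coeff_add]
  exact abs_add_le _ _

lemma pnorm_sub_le (p q : Polynomial ℝ) : pnorm (p - q) ≤ pnorm p + pnorm q := by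
  have := pnorm_add_le p (-q)
  simpa [pnorm, sub_eq_add_neg] using this

lemma pnorm_C_mul_le (a : ℝ) (p : Polynomial ℝ) : pnorm (C a * p) ≤ |a| * pnorm p := by
  have h : (C a * p).natDegree < p.natDegree + 1 :=
    lt_of_le_of_lt (natDegree_C_mul_le a p) (by omega)
  rw [pnorm_eq_sum h, pnorm, Finset.mul_sum]
  apply Finset.sum_le_sum
  intro i _
  rw [coeff_C_mul, abs_mul]

lemma pnorm_X_mul (p : Polynomial ℝ) : pnorm (X * p) ≤ pnorm p := by
  have h : (X * p).natDegree < p.natDegree + 2 := by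
    calc (X * p).natDegree ≤ X.natDegree + p.natDegree := natDegree_mul_le
    _ < p.natDegree + 2 := by rw [natDegree_X]; omega
  rw [pnorm_eq_sum h, Finset.sum_range_succ' _ (p.natDegree + 1)]
  simp only [coeff_X_mul]
  have h0 : (X * p).coeff 0 = 0 := by
    rw [mul_coeff_zero, coeff_X_zero, zero_mul]
  rw [h0, abs_zero, add_zero]
  exact le_of_eq (pnorm_eq_sum (by omega)).symm

lemma pnorm_derivative_le (p : Polynomial ℝ) :
    pnorm (derivative p) ≤ p.natDegree * pnorm p := by
  rcases Nat.eq_zero_or_pos p.natDegree with h0 | hpos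
  · have : derivative p = 0 := by
      have := p.natDegree_derivative_le
      rw [h0] at this
      simp only [Nat.zero_sub, Nat.le_zero] at this
      rcases natDegree_eq_zero.mp h0 with ⟨a, ha⟩
      rw [← ha]
      simp
    rw [this, pnorm_zero, h0]
    simp [pnorm_nonneg]
  · have h : (derivative p).natDegree < p.natDegree :=
      lt_of_le_of_lt p.natDegree_derivative_le (by omega)
    rw [pnorm_eq_sum h]
    have step1 : ∀ i ∈ Finset.range p.natDegree,
        |(derivative p).coeff i| ≤ p.natDegree * |p.coeff (i + 1)| := by
      intro i hi
      rw [coeff_derivative, abs_mul]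
      have : |((i : ℝ) + 1)| = (i : ℝ) + 1 := abs_of_pos (by positivity)
      rw [this]
      rw [Finset.mem_range] at hi
      calc |p.coeff (i+1)| * ((i:ℝ) + 1) ≤ |p.coeff (i+1)| * p.natDegree := by
            apply mul_le_mul_of_nonneg_left _ (abs_nonneg _)
            exact_mod_cast Nat.succ_le_of_lt hi
        _ = p.natDegree * |p.coeff (i+1)| := mul_comm _ _
    calc ∑ i ∈ Finset.range p.natDegree, |(derivative p).coeff i|
        ≤ ∑ i ∈ Finset.range p.natDegree, (p.natDegree : ℝ) * |p.coeff (i + 1)| :=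
          Finset.sum_le_sum step1
      _ = p.natDegree * ∑ i ∈ Finset.range p.natDegree, |p.coeff (i + 1)| := by
          rw [Finset.mul_sum]
      _ ≤ p.natDegree * pnorm p := by
          apply mul_le_mul_of_nonneg_left _ (by positivity)
          have : ∑ i ∈ Finset.range p.natDegree, |p.coeff (i+1)|
              ≤ ∑ i ∈ Finset.range (p.natDegree + 1), |p.coeff i| := by
            rw [Finset.sum_range_succ' _ p.natDegree]
            have := abs_nonneg (p.coeff 0)
            linarith
          exact le_trans this (sum_abs_coeff_le_pnorm p _)

/-- central moment polynomials of NB(t, ·), normalized: N i = E[(1 - Zρ/t)^i] -/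
noncomputable def NP (t : ℕ) : ℕ → Polynomial ℝ
  | 0 => 1
  | 1 => 0
  | (i+2) => C ((t:ℝ))⁻¹ * ((X - X^2) * derivative (NP t (i+1))
      - C ((i:ℝ)+1) * (1 - X) * (NP t (i+1) - NP t i))

lemma NP_zero (t : ℕ) : NP t 0 = 1 := rfl
lemma NP_one (t : ℕ) : NP t 1 = 0 := rfl
lemma NP_two (t : ℕ) : NP t (i+2) = C ((t:ℝ))⁻¹ * ((X - X^2) * derivative (NP t (i+1))
      - C ((i:ℝ)+1) * (1 - X) * (NP t (i+1) - NP t i)) := rfl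

/-- uniform succ form, using ℕ-subtraction -/
lemma NP_succ (t : ℕ) (i : ℕ) : NP t (i+1) = C ((t:ℝ))⁻¹ * ((X - X^2) * derivative (NP t i)
      - C ((i:ℝ)) * (1 - X) * (NP t i - NP t (i-1))) := by
  match i with
  | 0 => simp [NP_zero, NP_one]
  | (j+1) => rw [NP_two]; push_cast; ring_nf

lemma NP_natDegree_le (t : ℕ) : ∀ i, (NP t i).natDegree ≤ i := by
  intro i
  induction i using Nat.strong_induction_on with
  | _ i ih =>
    match i with
    | 0 => simp [NP_zero]
    | 1 => simp [NP_one]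
    | (j+2) =>
      rw [NP_two]
      calc (C ((t:ℝ))⁻¹ * ((X - X^2) * derivative (NP t (j+1))
          - C ((j:ℝ)+1) * (1 - X) * (NP t (j+1) - NP t j))).natDegree
          ≤ (C ((t:ℝ))⁻¹).natDegree + ((X - X^2) * derivative (NP t (j+1))
          - C ((j:ℝ)+1) * (1 - X) * (NP t (j+1) - NP t j)).natDegree := natDegree_mul_le
        _ ≤ j + 2 := by
          rw [natDegree_C, zero_add]
          apply le_trans (natDegree_sub_le _ _)
          apply max_le
          · apply le_trans natDegree_mul_le
            have h1 : (X - X^2 : Polynomial ℝ).natDegree ≤ 2 := by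
              apply le_trans (natDegree_sub_le _ _)
              simp [natDegree_X_pow]
            have h2 : (derivative (NP t (j+1))).natDegree ≤ j := by
              apply le_trans (natDegree_derivative_le _)
              have := ih (j+1) (by omega)
              omega
            omega
          · apply le_trans natDegree_mul_le
            have h3 : (C ((j:ℝ)+1) * (1 - X)).natDegree ≤ 1 := by
              apply le_trans natDegree_mul_le
              have : (1 - X : Polynomial ℝ).natDegree ≤ 1 := by
                apply le_trans (natDegree_sub_le _ _)
                simp
              simp only [natDegree_C]
              omega
            have h4 : (NP t (j+1) - NP t j).natDegree ≤ j + 1 := by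
              apply le_trans (natDegree_sub_le _ _)
              have := ih (j+1) (by omega)
              have := ih j (by omega)
              omega
            omega
lemma pnorm_NP_rec (t j : ℕ) (ht : 1 ≤ t) :
    pnorm (NP t (j+2)) ≤ (t:ℝ)⁻¹ * (2*((j:ℝ)+1) * pnorm (NP t (j+1))
      + 2*((j:ℝ)+1) * (pnorm (NP t (j+1)) + pnorm (NP t j))) := by
  rw [NP_two]
  have habs : |((t:ℝ))⁻¹| = (t:ℝ)⁻¹ := by
    rw [abs_of_nonneg]; positivity
  calc pnorm (C ((t:ℝ))⁻¹ * ((X - X^2) * derivative (NP t (j+1))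
        - C ((j:ℝ)+1) * (1 - X) * (NP t (j+1) - NP t j)))
      ≤ |((t:ℝ))⁻¹| * pnorm ((X - X^2) * derivative (NP t (j+1))
        - C ((j:ℝ)+1) * (1 - X) * (NP t (j+1) - NP t j)) := pnorm_C_mul_le _ _
    _ ≤ (t:ℝ)⁻¹ * (2*((j:ℝ)+1) * pnorm (NP t (j+1))
        + 2*((j:ℝ)+1) * (pnorm (NP t (j+1)) + pnorm (NP t j))) := by
      rw [habs]
      apply mul_le_mul_of_nonneg_left _ (by positivity)
      apply le_trans (pnorm_sub_le _ _)
      have hA : pnorm ((X - X^2) * derivative (NP t (j+1)))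
          ≤ 2*((j:ℝ)+1) * pnorm (NP t (j+1)) := by
        set D := derivative (NP t (j+1)) with hD
        have hrw : (X - X^2) * D = X * D - X * (X * D) := by ring
        rw [hrw]
        have h1 : pnorm (X * D) ≤ pnorm D := pnorm_X_mul D
        have h2 : pnorm (X * (X * D)) ≤ pnorm D :=
          le_trans (pnorm_X_mul _) (pnorm_X_mul D)
        have hdd : pnorm D ≤ ((j:ℝ)+1) * pnorm (NP t (j+1)) := by
          apply le_trans (pnorm_derivative_le _)
          apply mul_le_mul_of_nonneg_right _ (pnorm_nonneg _)
          have := NP_natDegree_le t (j+1)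
          exact_mod_cast Nat.cast_le.mpr this
        calc pnorm (X * D - X * (X * D)) ≤ pnorm (X * D) + pnorm (X * (X * D)) :=
              pnorm_sub_le _ _
          _ ≤ pnorm D + pnorm D := by linarith
          _ = 2 * pnorm D := by ring
          _ ≤ 2*((j:ℝ)+1) * pnorm (NP t (j+1)) := by
              rw [mul_assoc]
              apply mul_le_mul_of_nonneg_left hdd (by norm_num)
      have hB : pnorm (C ((j:ℝ)+1) * (1 - X) * (NP t (j+1) - NP t j))
          ≤ 2*((j:ℝ)+1) * (pnorm (NP t (j+1)) + pnorm (NP t j)) := by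
        set E := NP t (j+1) - NP t j with hE
        have hrw : C ((j:ℝ)+1) * (1 - X) * E = C ((j:ℝ)+1) * (E - X * E) := by ring
        rw [hrw]
        apply le_trans (pnorm_C_mul_le _ _)
        have habsj : |((j:ℝ)+1)| = (j:ℝ)+1 := abs_of_pos (by positivity)
        rw [habsj]
        have hEE : pnorm (E - X*E) ≤ 2 * pnorm E := by
          have := pnorm_sub_le E (X*E)
          have := pnorm_X_mul E
          linarith
        have hEb : pnorm E ≤ pnorm (NP t (j+1)) + pnorm (NP t j) := pnorm_sub_le _ _
        calc ((j:ℝ)+1) * pnorm (E - X*E) ≤ ((j:ℝ)+1) * (2 * pnorm E) := by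
              apply mul_le_mul_of_nonneg_left hEE (by positivity)
          _ ≤ 2*((j:ℝ)+1) * (pnorm (NP t (j+1)) + pnorm (NP t j)) := by
              nlinarith [pnorm_nonneg E, Nat.cast_nonneg (α := ℝ) j]
      linarith

/-- key invariant: pnorm (NP t i) ≤ 5^i (r/t)^⌈i/2⌉ for 1 ≤ i ≤ r, t ≥ r² -/
lemma NP_pnorm_bound {t r : ℕ} (ht1 : 1 ≤ t) (hr1 : 1 ≤ r) (hrt : r^2 ≤ t) :
    ∀ i, 1 ≤ i → i ≤ r → pnorm (NP t i) ≤ 5^i * ((r:ℝ)/t)^((i+1)/2) := by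
  have ht0 : (0:ℝ) < t := by exact_mod_cast ht1
  have hr0 : (0:ℝ) < r := by exact_mod_cast hr1
  have hx0 : (0:ℝ) < (r:ℝ)/t := by positivity
  have hx1 : (r:ℝ)/t ≤ 1 := by
    rw [div_le_one ht0]
    have : r ≤ t := le_trans (by nlinarith) hrt
    exact_mod_cast this
  intro i
  induction i using Nat.strong_induction_on with
  | _ i ih =>
    match i with
    | 0 => omega
    | 1 =>
      intro _ _
      rw [NP_one, pnorm_zero]
      positivity
    | (j+2) =>
      intro _ hjr
      set x : ℝ := (r:ℝ)/t with hxdef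
      -- the recursion bound
      have hrec := pnorm_NP_rec t j ht1
      -- (j+1 : ℝ) ≤ r
      have hjr' : ((j:ℝ)+1) ≤ r := by
        have : j + 1 ≤ r := by omega
        exact_mod_cast this
      -- coefficient: (t)⁻¹ * 2(j+1) ≤ 2x
      have hcoef : (t:ℝ)⁻¹ * (2*((j:ℝ)+1)) ≤ 2 * x := by
        have : (t:ℝ)⁻¹ * (2*((j:ℝ)+1)) ≤ (t:ℝ)⁻¹ * (2 * r) := by
          apply mul_le_mul_of_nonneg_left _ (by positivity)
          linarith
        calc (t:ℝ)⁻¹ * (2*((j:ℝ)+1)) ≤ (t:ℝ)⁻¹ * (2 * r) := this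
          _ = 2 * ((r:ℝ)/t) := by field_simp
          _ = 2 * x := rfl
      set u2 := pnorm (NP t (j+2)) with hu2
      set u1 := pnorm (NP t (j+1)) with hu1
      set u0 := pnorm (NP t j) with hu0
      have hu1n : 0 ≤ u1 := pnorm_nonneg _
      have hu0n : 0 ≤ u0 := pnorm_nonneg _
      have hmain : u2 ≤ 2 * x * (2 * u1 + u0) := by
        calc u2 ≤ (t:ℝ)⁻¹ * (2*((j:ℝ)+1) * u1 + 2*((j:ℝ)+1) * (u1 + u0)) := hrec
          _ = ((t:ℝ)⁻¹ * (2*((j:ℝ)+1))) * (2 * u1 + u0) := by ring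
          _ ≤ 2 * x * (2 * u1 + u0) := by
            apply mul_le_mul_of_nonneg_right hcoef (by linarith)
      have hexp : (j+2+1)/2 = (j+1)/2 + 1 := by omega
      rcases Nat.eq_zero_or_pos j with hj0 | hj1
      · -- j = 0 : u1 = 0, u0 = 1
        subst hj0
        rw [hu1, NP_one, pnorm_zero] at hmain
        rw [hu0, NP_zero, pnorm_one] at hmain
        have : u2 ≤ 2 * x := by linarith
        calc u2 ≤ 2 * x := this
          _ ≤ 25 * x := by linarith
          _ = 5^(0+2) * x^((0+2+1)/2) := by norm_num
      · -- j ≥ 1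
        have ih1 := ih (j+1) (by omega) (by omega) (by omega)
        have ih0 := ih j (by omega) (by omega) (by omega)
        have hxmono : x^((j+1+1)/2) ≤ x^((j+1)/2) :=
          pow_le_pow_of_le_one (le_of_lt hx0) hx1 (by omega)
        have hcomb : 2 * u1 + u0 ≤ 11 * 5^j * x^((j+1)/2) := by
          have h1 : u1 ≤ 5^(j+1) * x^((j+1)/2) := by
            calc u1 ≤ 5^(j+1) * x^((j+1+1)/2) := ih1
              _ ≤ 5^(j+1) * x^((j+1)/2) := by
                apply mul_le_mul_of_nonneg_left hxmono (by positivity)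
          have h0 : u0 ≤ 5^j * x^((j+1)/2) := ih0
          have e5 : (5:ℝ)^(j+1) = 5 * 5^j := by ring
          rw [e5] at h1
          nlinarith [pow_pos (show (0:ℝ)<5 by norm_num) j, pow_nonneg (le_of_lt hx0) ((j+1)/2)]
        calc u2 ≤ 2 * x * (2 * u1 + u0) := hmain
          _ ≤ 2 * x * (11 * 5^j * x^((j+1)/2)) := by
            apply mul_le_mul_of_nonneg_left hcomb (by positivity)
          _ = 22 * 5^j * (x * x^((j+1)/2)) := by ring
          _ = 22 * 5^j * x^((j+1)/2 + 1) := by rw [pow_succ]; ring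
          _ ≤ 5^(j+2) * x^((j+1)/2 + 1) := by
            have : (22:ℝ) * 5^j ≤ 5^(j+2) := by
              have : (5:ℝ)^(j+2) = 25 * 5^j := by ring
              rw [this]
              nlinarith [pow_pos (show (0:ℝ)<5 by norm_num) j]
            apply mul_le_mul_of_nonneg_right this (by positivity)
          _ = 5^(j+2) * x^((j+2+1)/2) := by rw [hexp]

/-! ### Analytic part: terms of the series -/

/-- `trm t i n ρ = nb_{t,ρ}(t+n) * (1 - (t+n)ρ/t)^i` -/
noncomputable def trm (t i n : ℕ) (ρ : ℝ) : ℝ :=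
  ((t-1+n).choose (t-1) : ℝ) * ((ρ^t * (1-ρ)^n) * (1 - ((t:ℝ)+(n:ℝ))/(t:ℝ)*ρ)^i)

/-- derivative of `trm` in `ρ` -/
noncomputable def dtrm (t i n : ℕ) (ρ : ℝ) : ℝ :=
  ((t-1+n).choose (t-1) : ℝ) *
    (((t:ℝ)*ρ^(t-1) * (1-ρ)^n + ρ^t * ((n:ℝ)*(1-ρ)^(n-1)*(-1))) * (1 - ((t:ℝ)+(n:ℝ))/(t:ℝ)*ρ)^i
      + (ρ^t * (1-ρ)^n) * ((i:ℝ)*(1 - ((t:ℝ)+(n:ℝ))/(t:ℝ)*ρ)^(i-1)*(-(((t:ℝ)+(n:ℝ))/(t:ℝ)*1))))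

lemma hasDerivAt_trm (t i n : ℕ) (ρ : ℝ) :
    HasDerivAt (fun ρ => trm t i n ρ) (dtrm t i n ρ) ρ := by
  have h1 : HasDerivAt (fun x : ℝ => x^t) ((t:ℝ)*ρ^(t-1)) ρ := hasDerivAt_pow t ρ
  have e2 : HasDerivAt (fun x : ℝ => 1 - x) (-1) ρ := (hasDerivAt_id ρ).const_sub 1
  have h2 : HasDerivAt (fun x : ℝ => (1-x)^n) ((n:ℝ)*(1-ρ)^(n-1)*(-1)) ρ := e2.pow n
  have e3 : HasDerivAt (fun x : ℝ => ((t:ℝ)+(n:ℝ))/(t:ℝ) * x) (((t:ℝ)+(n:ℝ))/(t:ℝ) * 1) ρ :=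
    (hasDerivAt_id ρ).const_mul _
  have e3' : HasDerivAt (fun x : ℝ => 1 - ((t:ℝ)+(n:ℝ))/(t:ℝ) * x)
      (-(((t:ℝ)+(n:ℝ))/(t:ℝ) * 1)) ρ := e3.const_sub 1
  have h3 : HasDerivAt (fun x : ℝ => (1 - ((t:ℝ)+(n:ℝ))/(t:ℝ) * x)^i)
      ((i:ℝ)*(1 - ((t:ℝ)+(n:ℝ))/(t:ℝ)*ρ)^(i-1)*(-(((t:ℝ)+(n:ℝ))/(t:ℝ)*1))) ρ := e3'.pow i
  exact (((h1.mul h2).mul h3).const_mul _)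

private lemma pow_pred_mul (x : ℝ) (k : ℕ) : (k:ℝ) * x^(k-1) * x = (k:ℝ) * x^k := by
  cases k with
  | zero => simp
  | succ m => rw [Nat.succ_sub_one, pow_succ]; ring

/-- fundamental termwise recursion -/
lemma trm_step (t i n : ℕ) (ht : 1 ≤ t) (ρ : ℝ) :
    trm t (i+1) n ρ = (t:ℝ)⁻¹ * (ρ*(1-ρ) * dtrm t i n ρ
      - (i:ℝ)*(1-ρ)*(trm t i n ρ - trm t (i-1) n ρ)) := by
  obtain ⟨s, rfl⟩ : ∃ s, t = s+1 := ⟨t-1, by omega⟩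
  have hs0 : ((s:ℝ)+1) ≠ 0 := by positivity
  cases i with
  | zero =>
    cases n with
    | zero =>
      simp only [trm, dtrm, Nat.add_sub_cancel, Nat.succ_sub_one, pow_succ, pow_zero,
        Nat.cast_zero, Nat.zero_sub, pow_one, Nat.cast_ofNat, Nat.cast_succ]
      push_cast
      field_simp
      ring
    | succ m =>
      simp only [trm, dtrm, Nat.add_sub_cancel, Nat.succ_sub_one, pow_succ, pow_zero,
        Nat.cast_zero, Nat.zero_sub, pow_one, Nat.cast_ofNat, Nat.cast_succ]
      push_cast
      field_simp
      ring
  | succ k =>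
    cases n with
    | zero =>
      simp only [trm, dtrm, Nat.add_sub_cancel, Nat.succ_sub_one, pow_succ, pow_zero,
        Nat.cast_zero, Nat.zero_sub, pow_one, Nat.cast_ofNat, Nat.cast_succ]
      push_cast
      field_simp
      ring
    | succ m =>
      simp only [trm, dtrm, Nat.add_sub_cancel, Nat.succ_sub_one, pow_succ, pow_zero,
        Nat.cast_zero, Nat.zero_sub, pow_one, Nat.cast_ofNat, Nat.cast_succ]
      push_cast
      field_simp
      ring
/-! ### Bounds on the terms, uniform over `Ioo (1/2) (3/4)` -/

/-- dominating summable sequence -/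
noncomputable def ubnd (t i : ℕ) (n : ℕ) : ℝ :=
  2*((n:ℝ)+((t:ℝ)+(i:ℝ)+2))^(t+i+1)*(1/2:ℝ)^n

lemma ubnd_summable (t i : ℕ) : Summable (ubnd t i) := by
  set K := t + i + 1 with hK
  set T : ℝ := (t:ℝ)+(i:ℝ)+2 with hT
  have hT1 : (1:ℝ) ≤ T := by
    have h1 : (0:ℝ) ≤ (t:ℝ) := Nat.cast_nonneg _
    have h2 : (0:ℝ) ≤ (i:ℝ) := Nat.cast_nonneg _
    rw [hT]; linarith
  have base : Summable (fun n : ℕ => ((n:ℝ))^K * (1/2:ℝ)^n) :=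
    summable_pow_mul_geometric_of_norm_lt_one K
      (by rw [Real.norm_eq_abs]; rw [abs_of_pos]; norm_num; norm_num)
  have s0 : Summable (fun n : ℕ => (((n+1:ℕ)):ℝ)^K * (1/2:ℝ)^(n+1)) := by
    exact_mod_cast (summable_nat_add_iff (f := fun n : ℕ => ((n:ℝ))^K * (1/2:ℝ)^n) 1).2 base
  have s1 : Summable (fun n : ℕ => ((n:ℝ)+1)^K * (1/2:ℝ)^n) := by
    have := s0.mul_left 2
    apply this.congr
    intro n
    push_cast
    rw [pow_succ]
    ring
  have s2 : Summable (fun n : ℕ => 2 * T^K * (((n:ℝ)+1)^K * (1/2:ℝ)^n)) := s1.mul_left _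
  apply Summable.of_nonneg_of_le _ _ s2
  · intro n
    unfold ubnd
    positivity
  · intro n
    unfold ubnd
    rw [← hK, ← hT]
    have h1 : ((n:ℝ) + T) ≤ T * ((n:ℝ)+1) := by nlinarith [Nat.cast_nonneg (α := ℝ) n]
    have h2 : ((n:ℝ) + T)^K ≤ (T * ((n:ℝ)+1))^K := by
      apply pow_le_pow_left₀ _ h1
      positivity
    calc 2*((n:ℝ)+T)^K*(1/2:ℝ)^n ≤ 2*(T*((n:ℝ)+1))^K*(1/2:ℝ)^n := by
          apply mul_le_mul_of_nonneg_right _ (by positivity)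
          apply mul_le_mul_of_nonneg_left h2 (by norm_num)
      _ = 2 * T^K * (((n:ℝ)+1)^K * (1/2:ℝ)^n) := by rw [mul_pow]; ring

lemma choose_cast_bound (t i n : ℕ) :
    ((t-1+n).choose (t-1) : ℝ) ≤ ((n:ℝ)+((t:ℝ)+(i:ℝ)+2))^(t-1) := by
  have h1 : (t-1+n).choose (t-1) ≤ (t-1+n)^(t-1) := Nat.choose_le_pow _ _
  have h2 : ((t-1+n:ℕ):ℝ) ≤ (n:ℝ)+((t:ℝ)+(i:ℝ)+2) := by
    push_cast
    have : ((t-1:ℕ):ℝ) ≤ (t:ℝ) := by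
      have : t - 1 ≤ t := Nat.sub_le _ _
      exact_mod_cast this
    have hi : (0:ℝ) ≤ (i:ℝ) := Nat.cast_nonneg _
    linarith
  calc ((t-1+n).choose (t-1) : ℝ) ≤ ((t-1+n:ℕ):ℝ)^(t-1) := by exact_mod_cast h1
    _ ≤ ((n:ℝ)+((t:ℝ)+(i:ℝ)+2))^(t-1) := by
        apply pow_le_pow_left₀ (Nat.cast_nonneg _) h2

lemma W_abs_bound (t i n : ℕ) (ht : 1 ≤ t) {ρ : ℝ}
    (hρ : ρ ∈ Set.Ioo (1/2:ℝ) (3/4)) :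
    |1 - ((t:ℝ)+(n:ℝ))/(t:ℝ)*ρ| ≤ (n:ℝ)+((t:ℝ)+(i:ℝ)+2) := by
  obtain ⟨hρ1, hρ2⟩ := hρ
  have ht0 : (0:ℝ) < t := by exact_mod_cast ht
  have hfrac : ((t:ℝ)+(n:ℝ))/(t:ℝ) ≤ 1 + (n:ℝ) := by
    rw [div_le_iff₀ ht0]
    have h1t : (1:ℝ) ≤ (t:ℝ) := by exact_mod_cast ht
    have hn : (0:ℝ) ≤ (n:ℝ) := Nat.cast_nonneg _
    nlinarith
  have hfrac0 : 0 ≤ ((t:ℝ)+(n:ℝ))/(t:ℝ) := by positivity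
  have hρpos : (0:ℝ) < ρ := by linarith
  have : |1 - ((t:ℝ)+(n:ℝ))/(t:ℝ)*ρ| ≤ 1 + ((t:ℝ)+(n:ℝ))/(t:ℝ)*ρ := by
    rw [abs_sub_comm]
    calc |((t:ℝ)+(n:ℝ))/(t:ℝ)*ρ - 1| ≤ |((t:ℝ)+(n:ℝ))/(t:ℝ)*ρ| + |(1:ℝ)| := abs_sub _ _
      _ = ((t:ℝ)+(n:ℝ))/(t:ℝ)*ρ + 1 := by
          rw [abs_one, abs_of_nonneg (by positivity)]
      _ = 1 + ((t:ℝ)+(n:ℝ))/(t:ℝ)*ρ := by ring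
  have h2 : ((t:ℝ)+(n:ℝ))/(t:ℝ)*ρ ≤ (1 + (n:ℝ)) * 1 := by
    apply mul_le_mul hfrac (by linarith) (le_of_lt hρpos) (by positivity)
  have hi : (0:ℝ) ≤ (i:ℝ) := Nat.cast_nonneg _
  have h1t : (1:ℝ) ≤ (t:ℝ) := by exact_mod_cast ht
  linarith

lemma trm_bound (t i n : ℕ) (ht : 1 ≤ t) {ρ : ℝ}
    (hρ : ρ ∈ Set.Ioo (1/2:ℝ) (3/4)) :
    |trm t i n ρ| ≤ ubnd t i n := by
  obtain ⟨hρ1, hρ2⟩ := hρ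
  set T : ℝ := (t:ℝ)+(i:ℝ)+2 with hT
  have hT2 : (1:ℝ) ≤ T := by
    have h1 : (0:ℝ) ≤ (t:ℝ) := Nat.cast_nonneg _
    have h2 : (0:ℝ) ≤ (i:ℝ) := Nat.cast_nonneg _
    rw [hT]; linarith
  have hnT : (1:ℝ) ≤ (n:ℝ) + T := by
    have : (0:ℝ) ≤ (n:ℝ) := Nat.cast_nonneg _
    linarith
  have hc := choose_cast_bound t i n
  have hcn : (0:ℝ) ≤ ((t-1+n).choose (t-1) : ℝ) := Nat.cast_nonneg _
  have hρa : |ρ^t| ≤ 1 := by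
    rw [abs_pow]
    apply pow_le_one₀ (abs_nonneg _)
    rw [abs_of_pos (by linarith)]
    linarith
  have h1ρ : |(1-ρ)^n| ≤ (1/2:ℝ)^n := by
    rw [abs_pow]
    apply pow_le_pow_left₀ (abs_nonneg _)
    rw [abs_of_pos (by linarith)]
    linarith
  have hW : |(1 - ((t:ℝ)+(n:ℝ))/(t:ℝ)*ρ)^i| ≤ ((n:ℝ)+T)^i := by
    rw [abs_pow]
    apply pow_le_pow_left₀ (abs_nonneg _)
    exact W_abs_bound t i n ht ⟨hρ1, hρ2⟩
  unfold trm ubnd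
  rw [← hT, abs_mul, abs_mul, abs_mul, abs_of_nonneg hcn]
  calc ((t-1+n).choose (t-1) : ℝ) * (|ρ^t| * |(1-ρ)^n| * |(1 - ((t:ℝ)+(n:ℝ))/(t:ℝ)*ρ)^i|)
      ≤ ((n:ℝ)+T)^(t-1) * (1 * (1/2:ℝ)^n * ((n:ℝ)+T)^i) := by
        apply mul_le_mul hc _ (by positivity) (by positivity)
        apply mul_le_mul _ hW (abs_nonneg _) (by positivity)
        apply mul_le_mul hρa h1ρ (abs_nonneg _) (by norm_num)
    _ = ((n:ℝ)+T)^(t-1+i) * (1/2:ℝ)^n := by rw [pow_add]; ring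
    _ ≤ 2*((n:ℝ)+T)^(t+i+1)*(1/2:ℝ)^n := by
        have hee : ((n:ℝ)+T)^(t-1+i) ≤ ((n:ℝ)+T)^(t+i+1) :=
          pow_le_pow_right₀ hnT (by omega)
        nlinarith [pow_pos (show (0:ℝ) < (1/2:ℝ) by norm_num) n,
          pow_nonneg (show (0:ℝ) ≤ (n:ℝ)+T by linarith) (t-1+i)]
lemma dtrm_bound (t i n : ℕ) (ht : 1 ≤ t) {ρ : ℝ}
    (hρ : ρ ∈ Set.Ioo (1/2:ℝ) (3/4)) :
    |dtrm t i n ρ| ≤ ubnd t i n := by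
  obtain ⟨hρ1, hρ2⟩ := hρ
  have ht0 : (0:ℝ) < t := by exact_mod_cast ht
  have h1t : (1:ℝ) ≤ (t:ℝ) := by exact_mod_cast ht
  have hn0 : (0:ℝ) ≤ (n:ℝ) := Nat.cast_nonneg _
  have hi0 : (0:ℝ) ≤ (i:ℝ) := Nat.cast_nonneg _
  set T : ℝ := (t:ℝ)+(i:ℝ)+2 with hT
  set M : ℝ := (n:ℝ)+T with hM
  have hM1 : (1:ℝ) ≤ M := by rw [hM, hT]; linarith
  have hM0 : (0:ℝ) ≤ M := by linarith
  set P : ℝ := (1/2:ℝ)^n with hP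
  have hP0 : (0:ℝ) < P := by rw [hP]; positivity
  have hρ0 : (0:ℝ) < ρ := by linarith
  have habsρpow : ∀ k : ℕ, |ρ^k| ≤ 1 := by
    intro k
    rw [abs_pow]
    apply pow_le_one₀ (abs_nonneg _)
    rw [abs_of_pos hρ0]; linarith
  have habs1ρ : |(1-ρ)^n| ≤ P := by
    rw [abs_pow, hP]
    apply pow_le_pow_left₀ (abs_nonneg _)
    rw [abs_of_pos (by linarith)]; linarith
  have habs1ρ' : |(1-ρ)^(n-1)| ≤ 2*P := by
    cases n with
    | zero => norm_num [hP]
    | succ m =>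
      rw [Nat.succ_sub_one, abs_pow, hP, pow_succ]
      have h12 : |1-ρ| ≤ (1/2:ℝ) := by rw [abs_of_pos (by linarith)]; linarith
      have := pow_le_pow_left₀ (abs_nonneg (1-ρ)) h12 m
      nlinarith [pow_nonneg (abs_nonneg (1-ρ)) m, pow_pos (show (0:ℝ)<1/2 by norm_num) m]
  have hWa : |1 - ((t:ℝ)+(n:ℝ))/(t:ℝ)*ρ| ≤ M := W_abs_bound t i n ht ⟨hρ1, hρ2⟩
  have hWi : |(1 - ((t:ℝ)+(n:ℝ))/(t:ℝ)*ρ)^i| ≤ M^i := by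
    rw [abs_pow]; exact pow_le_pow_left₀ (abs_nonneg _) hWa i
  have hWi1 : |(1 - ((t:ℝ)+(n:ℝ))/(t:ℝ)*ρ)^(i-1)| ≤ M^(i-1) := by
    rw [abs_pow]; exact pow_le_pow_left₀ (abs_nonneg _) hWa (i-1)
  have hc2 : |(((t:ℝ)+(n:ℝ))/(t:ℝ)*1)| ≤ M := by
    rw [mul_one, abs_of_nonneg (by positivity), hM, hT]
    rw [div_le_iff₀ ht0]
    nlinarith
  have hc := choose_cast_bound t i n
  have hcn : (0:ℝ) ≤ ((t-1+n).choose (t-1) : ℝ) := Nat.cast_nonneg _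
  -- bound the first summand
  have hX1 : |(t:ℝ)*ρ^(t-1) * (1-ρ)^n + ρ^t * ((n:ℝ)*(1-ρ)^(n-1)*(-1))|
      ≤ ((t:ℝ)+2*(n:ℝ))*P := by
    calc |(t:ℝ)*ρ^(t-1) * (1-ρ)^n + ρ^t * ((n:ℝ)*(1-ρ)^(n-1)*(-1))|
        ≤ |(t:ℝ)*ρ^(t-1) * (1-ρ)^n| + |ρ^t * ((n:ℝ)*(1-ρ)^(n-1)*(-1))| := abs_add_le _ _
      _ ≤ (t:ℝ)*1*P + 1*((n:ℝ)*(2*P)*1) := by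
          apply add_le_add
          · rw [abs_mul, abs_mul, abs_of_nonneg (by positivity : (0:ℝ) ≤ (t:ℝ))]
            apply mul_le_mul _ habs1ρ (abs_nonneg _) (by positivity)
            apply mul_le_mul_of_nonneg_left (habsρpow _) (by positivity)
          · rw [abs_mul, abs_mul, abs_mul, abs_neg, abs_one,
              abs_of_nonneg (by positivity : (0:ℝ) ≤ (n:ℝ))]
            apply mul_le_mul (habsρpow _) _ (by positivity) (by norm_num)
            apply mul_le_mul _ le_rfl (by norm_num) (by positivity)
            apply mul_le_mul_of_nonneg_left habs1ρ' (by positivity)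
      _ = ((t:ℝ)+2*(n:ℝ))*P := by ring
  -- bound the second summand
  have hX2 : |(ρ^t * (1-ρ)^n) * ((i:ℝ)*(1 - ((t:ℝ)+(n:ℝ))/(t:ℝ)*ρ)^(i-1)
      *(-(((t:ℝ)+(n:ℝ))/(t:ℝ)*1)))| ≤ P * ((i:ℝ) * M^i) := by
    rw [abs_mul, abs_mul, abs_mul, abs_neg, abs_mul,
      abs_of_nonneg (by positivity : (0:ℝ) ≤ (i:ℝ))]
    calc |ρ^t| * |(1-ρ)^n| * ((i:ℝ) * |(1 - ((t:ℝ)+(n:ℝ))/(t:ℝ)*ρ)^(i-1)|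
          * |((t:ℝ)+(n:ℝ))/(t:ℝ)*1|)
        ≤ 1 * P * ((i:ℝ) * M^(i-1) * M) := by
          apply mul_le_mul
          · apply mul_le_mul (habsρpow _) habs1ρ (abs_nonneg _) (by norm_num)
          · apply mul_le_mul _ hc2 (abs_nonneg _) (by positivity)
            apply mul_le_mul_of_nonneg_left hWi1 hi0
          · positivity
          · positivity
      _ = P * ((i:ℝ) * M^(i-1) * M) := by ring
      _ = P * ((i:ℝ) * M^i) := by rw [pow_pred_mul]
  -- assemble
  have hsum : |dtrm t i n ρ| ≤ ((t-1+n).choose (t-1) : ℝ)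
      * (((t:ℝ)+2*(n:ℝ))*P * M^i + P * ((i:ℝ) * M^i)) := by
    unfold dtrm
    rw [abs_mul, abs_of_nonneg hcn]
    apply mul_le_mul_of_nonneg_left _ hcn
    calc |((t:ℝ)*ρ^(t-1) * (1-ρ)^n + ρ^t * ((n:ℝ)*(1-ρ)^(n-1)*(-1)))
          * (1 - ((t:ℝ)+(n:ℝ))/(t:ℝ)*ρ)^i
          + (ρ^t * (1-ρ)^n) * ((i:ℝ)*(1 - ((t:ℝ)+(n:ℝ))/(t:ℝ)*ρ)^(i-1)
          *(-(((t:ℝ)+(n:ℝ))/(t:ℝ)*1)))|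
        ≤ |((t:ℝ)*ρ^(t-1) * (1-ρ)^n + ρ^t * ((n:ℝ)*(1-ρ)^(n-1)*(-1)))
          * (1 - ((t:ℝ)+(n:ℝ))/(t:ℝ)*ρ)^i|
          + |(ρ^t * (1-ρ)^n) * ((i:ℝ)*(1 - ((t:ℝ)+(n:ℝ))/(t:ℝ)*ρ)^(i-1)
          *(-(((t:ℝ)+(n:ℝ))/(t:ℝ)*1)))| := abs_add_le _ _
      _ ≤ ((t:ℝ)+2*(n:ℝ))*P * M^i + P * ((i:ℝ) * M^i) := by
          apply add_le_add _ hX2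
          rw [abs_mul]
          apply mul_le_mul hX1 hWi (abs_nonneg _) (by positivity)
  calc |dtrm t i n ρ| ≤ ((t-1+n).choose (t-1) : ℝ)
        * (((t:ℝ)+2*(n:ℝ))*P * M^i + P * ((i:ℝ) * M^i)) := hsum
    _ = ((t-1+n).choose (t-1) : ℝ) * (((t:ℝ)+2*(n:ℝ)+(i:ℝ)) * (M^i * P)) := by ring
    _ ≤ M^(t-1) * ((2*M) * (M^i * P)) := by
        apply mul_le_mul hc _ (by positivity) (by positivity)
        apply mul_le_mul_of_nonneg_right _ (by positivity)
        rw [hM, hT]; linarith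
    _ = 2 * M^(t-1+i+1) * P := by rw [pow_add, pow_add]; ring
    _ ≤ 2 * M^(t+i+1) * P := by
        have : M^(t-1+i+1) ≤ M^(t+i+1) := pow_le_pow_right₀ hM1 (by omega)
        nlinarith
    _ = ubnd t i n := by rw [ubnd]
/-! ### The series sums to the moment polynomials -/

lemma hasSum_trm (t : ℕ) (ht : 1 ≤ t) :
    ∀ i, ∀ ρ ∈ Set.Ioo (1/2:ℝ) (3/4),
      HasSum (fun n => trm t i n ρ) (Polynomial.eval ρ (NP t i)) := by
  intro i
  induction i using Nat.strong_induction_on with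
  | _ i ih =>
    cases i with
    | zero =>
      intro ρ hρ
      obtain ⟨h1, h2⟩ := hρ
      have hρ0 : (0:ℝ) < ρ := by linarith
      have hx : ‖1 - ρ‖ < 1 := by
        rw [Real.norm_eq_abs, abs_of_pos (by linarith)]; linarith
      have base := hasSum_choose_mul_geometric_of_norm_lt_one (t-1) hx
      have e1 : (1:ℝ) - (1-ρ) = ρ := by ring
      have e2 : t - 1 + 1 = t := by omega
      rw [e1, e2] at base
      have base2 := base.mul_left (ρ^t)
      have hval : ρ^t * (1/ρ^t) = 1 := by
        field_simp
      rw [hval] at base2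
      have hfun : (fun n => trm t 0 n ρ)
          = fun n => ρ^t * (((n + (t-1)).choose (t-1) : ℝ) * (1-ρ)^n) := by
        funext n
        rw [trm, Nat.add_comm (t-1) n]
        ring
      rw [NP_zero, Polynomial.eval_one, hfun]
      exact base2
    | succ j =>
      intro ρ hρ
      have hsum_i := ih j (by omega)
      have hsum_im := ih (j-1) (by omega)
      have hu := ubnd_summable t j
      have hb : ∀ (n : ℕ), ∀ x ∈ Set.Ioo (1/2:ℝ) (3/4), ‖dtrm t j n x‖ ≤ ubnd t j n :=
        fun n x hx => by rw [Real.norm_eq_abs]; exact dtrm_bound t j n ht hx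
      have htuo := tendstoUniformlyOn_tsum_nat hu hb
      have hder : ∀ᶠ N in Filter.atTop, ∀ x ∈ Set.Ioo (1/2:ℝ) (3/4),
          HasDerivAt (fun y => ∑ n ∈ Finset.range N, trm t j n y)
            (∑ n ∈ Finset.range N, dtrm t j n x) x :=
        Filter.Eventually.of_forall
          (fun N x _ => HasDerivAt.fun_sum (fun n _ => hasDerivAt_trm t j n x))
      have hten : ∀ x ∈ Set.Ioo (1/2:ℝ) (3/4),
          Filter.Tendsto (fun N => ∑ n ∈ Finset.range N, trm t j n x) Filter.atTop
            (nhds (Polynomial.eval x (NP t j))) :=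
        fun x hx => (hsum_i x hx).tendsto_sum_nat
      have hkey : HasDerivAt (fun y => Polynomial.eval y (NP t j)) (∑' n, dtrm t j n ρ) ρ :=
        hasDerivAt_of_tendstoUniformlyOn isOpen_Ioo htuo hder hten hρ
      have hds : ∑' n, dtrm t j n ρ = Polynomial.eval ρ (Polynomial.derivative (NP t j)) :=
        hkey.unique ((NP t j).hasDerivAt ρ)
      have hsummable : Summable (fun n => dtrm t j n ρ) :=
        Summable.of_norm_bounded hu (fun n => hb n ρ hρ)
      have hsumd : HasSum (fun n => dtrm t j n ρ)
          (Polynomial.eval ρ (Polynomial.derivative (NP t j))) := by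
        have := hsummable.hasSum
        rwa [hds] at this
      have h1 := hsumd.mul_left (ρ*(1-ρ))
      have h2 := ((hsum_i ρ hρ).sub (hsum_im ρ hρ)).mul_left ((j:ℝ)*(1-ρ))
      have h4 := (h1.sub h2).mul_left ((t:ℝ)⁻¹)
      have hfun : (fun n => (t:ℝ)⁻¹ * (ρ*(1-ρ) * dtrm t j n ρ
          - (j:ℝ)*(1-ρ)*(trm t j n ρ - trm t (j-1) n ρ)))
          = fun n => trm t (j+1) n ρ := by
        funext n
        rw [← trm_step t j n ht ρ]
      have hval : (t:ℝ)⁻¹ * (ρ*(1-ρ) * Polynomial.eval ρ (Polynomial.derivative (NP t j))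
          - (j:ℝ)*(1-ρ)*(Polynomial.eval ρ (NP t j) - Polynomial.eval ρ (NP t (j-1))))
          = Polynomial.eval ρ (NP t (j+1)) := by
        rw [NP_succ t j]
        simp only [Polynomial.eval_mul, Polynomial.eval_sub, Polynomial.eval_add,
          Polynomial.eval_C, Polynomial.eval_X, Polynomial.eval_pow, Polynomial.eval_one]
        ring
      rw [hfun, hval] at h4
      exact h4
/-! ### The explicit bias polynomial Q and identification with P -/

noncomputable def QP (t r : ℕ) : Polynomial ℝ :=
  ∑ i ∈ Finset.Icc 1 r, Polynomial.C (-(1:ℝ)/i) * NP t i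

lemma QP_natDegree_le (t r : ℕ) : (QP t r).natDegree ≤ r := by
  apply Polynomial.natDegree_sum_le_of_forall_le
  intro i hi
  rw [Finset.mem_Icc] at hi
  calc (Polynomial.C (-(1:ℝ)/i) * NP t i).natDegree
      ≤ (NP t i).natDegree := Polynomial.natDegree_C_mul_le _ _
    _ ≤ i := NP_natDegree_le t i
    _ ≤ r := hi.2

lemma pnorm_sum_le {s : Finset ℕ} {f : ℕ → Polynomial ℝ} :
    pnorm (∑ i ∈ s, f i) ≤ ∑ i ∈ s, pnorm (f i) := by
  induction s using Finset.induction with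
  | empty => simp [pnorm_zero]
  | insert _ _ hx ih =>
    rw [Finset.sum_insert hx, Finset.sum_insert hx]
    exact le_trans (pnorm_add_le _ _) (by linarith)

/-- expansion of the summand of the statement's tsum -/
lemma nb_taylor_eq (t r n : ℕ) (ht : 1 ≤ t) (ρ : ℝ) :
    nbPMF t ρ (t + n) * taylorLog r (((t + n : ℕ) : ℝ) * ρ / (t : ℝ))
      = ∑ i ∈ Finset.Icc 1 r, (-(1:ℝ)/i) * trm t i n ρ := by
  have hnb : nbPMF t ρ (t + n) = ((t-1+n).choose (t-1) : ℝ) * ρ^t * (1-ρ)^n := by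
    unfold nbPMF
    congr 2
    · congr 2
      omega
    · congr 1
      omega
  have hz : ((t + n : ℕ) : ℝ) * ρ / (t : ℝ) - 1 = -(1 - ((t:ℝ)+(n:ℝ))/(t:ℝ)*ρ) := by
    push_cast
    ring
  unfold taylorLog
  rw [Finset.mul_sum]
  apply Finset.sum_congr rfl
  intro i hi
  have hbase : (((t + n : ℕ) : ℝ) * ρ / (t : ℝ) - 1)^i
      = (-1:ℝ)^i * (1 - ((t:ℝ)+(n:ℝ))/(t:ℝ)*ρ)^i := by
    rw [hz, neg_pow]
  rw [hnb, hbase, trm]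
  have hsgn : ((-1:ℝ))^(i+1) * (-1)^i = -1 := by
    rw [pow_succ]
    have : ((-1:ℝ))^i * (-1)^i = 1 := by
      rw [← mul_pow]
      norm_num
    nlinarith [this]
  linear_combination (((t-1+n).choose (t-1) : ℝ) * ρ^t * (1-ρ)^n
    * (1 - ((t:ℝ)+(n:ℝ))/(t:ℝ)*ρ)^i / i) * hsgn
lemma tsum_eq_QP (t r : ℕ) (ht : 1 ≤ t) {ρ : ℝ} (hρ : ρ ∈ Set.Ioo (1/2:ℝ) (3/4)) :
    ∑' n : ℕ, nbPMF t ρ (t + n) * taylorLog r (((t + n : ℕ) : ℝ) * ρ / (t : ℝ))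
      = Polynomial.eval ρ (QP t r) := by
  have hsummands : ∀ i ∈ Finset.Icc 1 r, Summable (fun n => (-(1:ℝ)/i) * trm t i n ρ) :=
    fun i _ => ((hasSum_trm t ht i ρ hρ).summable).mul_left _
  calc ∑' n : ℕ, nbPMF t ρ (t + n) * taylorLog r (((t + n : ℕ) : ℝ) * ρ / (t : ℝ))
      = ∑' n : ℕ, ∑ i ∈ Finset.Icc 1 r, (-(1:ℝ)/i) * trm t i n ρ := by
        congr 1
        funext n
        exact nb_taylor_eq t r n ht ρ
    _ = ∑ i ∈ Finset.Icc 1 r, ∑' n : ℕ, (-(1:ℝ)/i) * trm t i n ρ := Summable.tsum_finsetSum hsummands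
    _ = ∑ i ∈ Finset.Icc 1 r, (-(1:ℝ)/i) * Polynomial.eval ρ (NP t i) := by
        apply Finset.sum_congr rfl
        intro i _
        exact ((hasSum_trm t ht i ρ hρ).mul_left _).tsum_eq
    _ = Polynomial.eval ρ (QP t r) := by
        rw [QP, Polynomial.eval_finset_sum]
        apply Finset.sum_congr rfl
        intro i _
        rw [Polynomial.eval_mul, Polynomial.eval_C]

lemma P_eq_QP (t r : ℕ) (ht : 1 ≤ t) (P : Polynomial ℝ)
    (hP : ∀ ρ ∈ Set.Ioc (0:ℝ) 1, P.eval ρ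
      = ∑' n : ℕ, nbPMF t ρ (t + n) * taylorLog r (((t + n : ℕ) : ℝ) * ρ / (t : ℝ))) :
    P = QP t r := by
  rw [← sub_eq_zero]
  apply Polynomial.eq_zero_of_infinite_isRoot
  apply Set.Infinite.mono _ (Set.Ioo_infinite (show (1/2:ℝ) < 5/8 by norm_num))
  intro x hx
  obtain ⟨hx1, hx2⟩ := hx
  have hx' : x ∈ Set.Ioo (1/2:ℝ) (3/4) := ⟨hx1, by linarith⟩
  have hx'' : x ∈ Set.Ioc (0:ℝ) 1 := ⟨by linarith, by linarith⟩
  simp only [Set.mem_setOf_eq, Polynomial.IsRoot.def, Polynomial.eval_sub]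
  rw [hP x hx'', tsum_eq_QP t r ht hx']
  ring

private lemma half_pow_ceil_le (i : ℕ) : ((1:ℝ)/2)^((i+1)/2) ≤ 2*(3/4:ℝ)^i := by
  set j := (i+1)/2 with hj
  have h2j : i ≤ 2*j := by omega
  have c1 : ((1:ℝ)/2)^j ≤ ((9:ℝ)/16)^j := by
    apply pow_le_pow_left₀ (by norm_num) (by norm_num)
  have c2 : ((9:ℝ)/16)^j = ((3:ℝ)/4)^(2*j) := by
    rw [pow_mul]
    norm_num
  have c3 : ((3:ℝ)/4)^(2*j) ≤ ((3:ℝ)/4)^i :=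
    pow_le_pow_of_le_one (by norm_num) (by norm_num) h2j
  have c4 : ((3:ℝ)/4)^i ≤ 2*(3/4:ℝ)^i := by
    nlinarith [pow_nonneg (show (0:ℝ) ≤ 3/4 by norm_num) i]
  linarith [c1, c2.le, c3, c4]

private lemma geom34_sum_le (m : ℕ) : ∑ i ∈ Finset.range m, ((3:ℝ)/4)^i ≤ 4 := by
  rw [geom_sum_eq (by norm_num : (3/4:ℝ) ≠ 1)]
  have h1 : (0:ℝ) ≤ (3/4:ℝ)^m := by positivity
  have h2 : ((3:ℝ)/4)^m ≤ 1 := pow_le_one₀ (by norm_num) (by norm_num)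
  have : ((3:ℝ)/4)^m - 1 ≤ 0 := by linarith
  rw [div_le_iff_of_neg (by norm_num : (3/4:ℝ) - 1 < 0)]
  linarith

lemma QP_pnorm_le (t r : ℕ) (ht1 : 1 ≤ t) (hr1 : 1 ≤ r) (hrt : r^2 ≤ t) :
    pnorm (QP t r) ≤ 2500 * 5^50 := by
  have ht0 : (0:ℝ) < t := by exact_mod_cast ht1
  have hr0 : (0:ℝ) < r := by exact_mod_cast hr1
  set x : ℝ := (r:ℝ)/t with hx
  have hx0 : 0 < x := by positivity
  have hx1 : x ≤ 1 := by
    rw [hx, div_le_one ht0]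
    have : r ≤ t := le_trans (by nlinarith) hrt
    exact_mod_cast this
  have hxr : x ≤ 1/(r:ℝ) := by
    rw [hx, div_le_div_iff₀ ht0 hr0]
    have h2 : ((r^2 : ℕ) : ℝ) ≤ (t:ℝ) := by exact_mod_cast hrt
    push_cast at h2
    nlinarith [h2]
  have step1 : pnorm (QP t r) ≤ ∑ i ∈ Finset.Icc 1 r, pnorm (Polynomial.C (-(1:ℝ)/i) * NP t i) := by
    rw [QP]; exact pnorm_sum_le
  have step2 : ∀ i ∈ Finset.Icc 1 r,
      pnorm (Polynomial.C (-(1:ℝ)/i) * NP t i) ≤ 5^i * x^((i+1)/2) := by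
    intro i hi
    rw [Finset.mem_Icc] at hi
    have hi1 : (1:ℝ) ≤ i := by exact_mod_cast hi.1
    have habs : |(-(1:ℝ)/i)| ≤ 1 := by
      rw [abs_div, abs_neg, abs_one, abs_of_pos (by linarith)]
      rw [div_le_one (by linarith)]
      linarith
    calc pnorm (Polynomial.C (-(1:ℝ)/i) * NP t i)
        ≤ |(-(1:ℝ)/i)| * pnorm (NP t i) := pnorm_C_mul_le _ _
      _ ≤ 1 * pnorm (NP t i) := by
          apply mul_le_mul_of_nonneg_right habs (pnorm_nonneg _)
      _ = pnorm (NP t i) := one_mul _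
      _ ≤ 5^i * x^((i+1)/2) := NP_pnorm_bound ht1 hr1 hrt i hi.1 hi.2
  have step3 : pnorm (QP t r) ≤ ∑ i ∈ Finset.Icc 1 r, (5:ℝ)^i * x^((i+1)/2) :=
    le_trans step1 (Finset.sum_le_sum step2)
  rcases le_or_gt r 49 with h49 | h50
  · -- small r
    have each : ∀ i ∈ Finset.Icc 1 r, (5:ℝ)^i * x^((i+1)/2) ≤ 5^49 := by
      intro i hi
      rw [Finset.mem_Icc] at hi
      have h5 : (5:ℝ)^i ≤ 5^49 := pow_le_pow_right₀ (by norm_num) (by omega)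
      have hxp : x^((i+1)/2) ≤ 1 := pow_le_one₀ (le_of_lt hx0) hx1
      nlinarith [pow_pos (show (0:ℝ)<5 by norm_num) i, pow_pos hx0 ((i+1)/2)]
    calc pnorm (QP t r) ≤ ∑ i ∈ Finset.Icc 1 r, (5:ℝ)^i * x^((i+1)/2) := step3
      _ ≤ ∑ _i ∈ Finset.Icc 1 r, (5:ℝ)^49 := Finset.sum_le_sum each
      _ = (Finset.Icc 1 r).card * (5:ℝ)^49 := by rw [Finset.sum_const, nsmul_eq_mul]
      _ ≤ 49 * (5:ℝ)^49 := by
          have : (Finset.Icc 1 r).card = r := by rw [Nat.card_Icc]; omega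
          rw [this]
          have : (r:ℝ) ≤ 49 := by exact_mod_cast h49
          nlinarith [pow_pos (show (0:ℝ)<5 by norm_num) 49]
      _ ≤ 2500 * 5^50 := by norm_num
  · -- large r : 25/r ≤ 1/2
    have each : ∀ i ∈ Finset.Icc 1 r, (5:ℝ)^i * x^((i+1)/2) ≤ 2*(3/4:ℝ)^i := by
      intro i hi
      rw [Finset.mem_Icc] at hi
      have e1 : (5:ℝ)^i ≤ 25^((i+1)/2) := by
        calc (5:ℝ)^i ≤ 5^(2*((i+1)/2)) := pow_le_pow_right₀ (by norm_num) (by omega)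
          _ = 25^((i+1)/2) := by rw [pow_mul]; norm_num
      have e2 : x^((i+1)/2) ≤ (1/(r:ℝ))^((i+1)/2) :=
        pow_le_pow_left₀ (le_of_lt hx0) hxr _
      have e3 : (5:ℝ)^i * x^((i+1)/2) ≤ (25/(r:ℝ))^((i+1)/2) := by
        calc (5:ℝ)^i * x^((i+1)/2) ≤ 25^((i+1)/2) * (1/(r:ℝ))^((i+1)/2) := by
              apply mul_le_mul e1 e2 (by positivity) (by positivity)
          _ = (25/(r:ℝ))^((i+1)/2) := by
              rw [← mul_pow]
              congr 1
              field_simp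
      have e4 : (25/(r:ℝ)) ≤ 1/2 := by
        rw [div_le_div_iff₀ hr0 (by norm_num)]
        have : (50:ℝ) ≤ r := by exact_mod_cast h50
        linarith
      have e5 : (25/(r:ℝ))^((i+1)/2) ≤ (1/2:ℝ)^((i+1)/2) :=
        pow_le_pow_left₀ (by positivity) e4 _
      exact le_trans e3 (le_trans e5 (half_pow_ceil_le i))
    calc pnorm (QP t r) ≤ ∑ i ∈ Finset.Icc 1 r, (5:ℝ)^i * x^((i+1)/2) := step3
      _ ≤ ∑ i ∈ Finset.Icc 1 r, 2*(3/4:ℝ)^i := Finset.sum_le_sum each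
      _ ≤ ∑ i ∈ Finset.range (r+1), 2*(3/4:ℝ)^i := by
          apply Finset.sum_le_sum_of_subset_of_nonneg
          · intro i hi
            rw [Finset.mem_Icc] at hi
            rw [Finset.mem_range]
            omega
          · intro i _ _
            positivity
      _ = 2 * ∑ i ∈ Finset.range (r+1), (3/4:ℝ)^i := by rw [Finset.mul_sum]
      _ ≤ 2 * 4 := by
          have := geom34_sum_le (r+1)
          linarith
      _ ≤ 2500 * 5^50 := by norm_num
/-- There is a universal constant `c > 0` such that for all `r, t ≥ 1`
with `r² ≤ t`, if `P` is the polynomial of degree at most `r` agreeing on `(0,1]` with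
`ρ ↦ E_{Z ~ NB(t,ρ)}[f_r(Zρ/t)]`, then the sum of the absolute values of the
coefficients of `P` is at most `c`; in particular the linear function
`g(b) = a₀ + ∑ᵢ a_{i+1} bᵢ` satisfies `|g(b)| ≤ c` for all `b ∈ {0,1}^r`. -/
theorem coefficients_of_bias_polynomial_bounded :
    ∃ c : ℝ, 0 < c ∧
      ∀ r t : ℕ, 1 ≤ r → 1 ≤ t → r ^ 2 ≤ t →
        ∀ P : Polynomial ℝ, P.natDegree ≤ r →
          (∀ ρ ∈ Set.Ioc (0 : ℝ) 1,
            P.eval ρ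
              = ∑' n : ℕ, nbPMF t ρ (t + n) * taylorLog r (((t + n : ℕ) : ℝ) * ρ / (t : ℝ))) →
          (∑ i ∈ Finset.range (r + 1), |P.coeff i|) ≤ c ∧
          ∀ b : Fin r → ℝ, (∀ i, b i = 0 ∨ b i = 1) →
            |P.coeff 0 + ∑ i : Fin r, P.coeff ((i : ℕ) + 1) * b i| ≤ c := by
  refine ⟨2500 * 5^50, by norm_num, ?_⟩
  intro r t hr ht hrt P _ hP
  have hPQ : P = QP t r := P_eq_QP t r ht P hP
  have hQn : pnorm (QP t r) ≤ 2500 * 5^50 := QP_pnorm_le t r ht hr hrt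
  have hsum : (∑ i ∈ Finset.range (r + 1), |P.coeff i|) ≤ 2500 * 5^50 := by
    rw [hPQ]
    exact le_trans (sum_abs_coeff_le_pnorm _ _) hQn
  refine ⟨hsum, ?_⟩
  intro b hb
  have hb1 : ∀ i, |b i| ≤ 1 := by
    intro i
    rcases hb i with h | h <;> rw [h] <;> norm_num
  calc |P.coeff 0 + ∑ i : Fin r, P.coeff ((i:ℕ)+1) * b i|
      ≤ |P.coeff 0| + |∑ i : Fin r, P.coeff ((i:ℕ)+1) * b i| := abs_add_le _ _
    _ ≤ |P.coeff 0| + ∑ i : Fin r, |P.coeff ((i:ℕ)+1) * b i| := by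
        have := Finset.abs_sum_le_sum_abs (fun i : Fin r => P.coeff ((i:ℕ)+1) * b i)
          Finset.univ
        linarith
    _ ≤ |P.coeff 0| + ∑ i : Fin r, |P.coeff ((i:ℕ)+1)| := by
        apply add_le_add_right
        apply Finset.sum_le_sum
        intro i _
        rw [abs_mul]
        nlinarith [abs_nonneg (P.coeff ((i:ℕ)+1)), hb1 i, abs_nonneg (b i)]
    _ = ∑ i ∈ Finset.range (r+1), |P.coeff i| := by
        rw [Finset.sum_range_succ' (fun i => |P.coeff i|) r,
          Fin.sum_univ_eq_sum_range (fun i => |P.coeff (i+1)|) r]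
        ring
    _ ≤ 2500 * 5^50 := hsum
end

section
/- For every real z > 0 and every integer r ≥ 1: | ln z − Σ_{i=1}^r (−1)^{i+1}(z−1)^i/i | ≤ |z−1|^r · |ln z|. That is, the error of the degree-r Taylor expansion of the natural logarithm at 1 is at most |z−1|^r times |ln z|. -/
open intervalIntegral

private lemma hasDerivAt_remainder (r : ℕ) (t : ℝ) (ht : 0 < t) :
    HasDerivAt (fun z : ℝ => Real.log z - ∑ i ∈ Finset.Icc 1 r,
      (-1 : ℝ) ^ (i + 1) / (i : ℝ) * (z - 1) ^ i) ((1 - t) ^ r / t) t := by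
  have hlog : HasDerivAt Real.log (1 / t) t := by
    simpa [one_div] using Real.hasDerivAt_log ht.ne'
  have hsum : HasDerivAt (fun z : ℝ => ∑ i ∈ Finset.Icc 1 r,
      (-1 : ℝ) ^ (i + 1) / (i : ℝ) * (z - 1) ^ i)
      (∑ j ∈ Finset.range r, (1 - t) ^ j) t := by
    have h : ∀ i ∈ Finset.Icc 1 r, HasDerivAt
        (fun z : ℝ => (-1 : ℝ) ^ (i + 1) / (i : ℝ) * (z - 1) ^ i)
        ((-1 : ℝ) ^ (i + 1) / (i : ℝ) * ((i : ℝ) * (t - 1) ^ (i - 1))) t := by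
      intro i _
      simpa using (((hasDerivAt_id t).sub_const 1).pow i).const_mul ((-1 : ℝ) ^ (i + 1) / (i : ℝ))
    have hd := HasDerivAt.fun_sum h
    refine hd.congr_deriv (Eq.symm ?_)
    rw [← Finset.Ico_add_one_right_eq_Icc, Finset.sum_Ico_eq_sum_range]
    apply Finset.sum_congr (by norm_num)
    intro j _
    have hj : ((j : ℝ) + 1) ≠ 0 := by positivity
    have h1 : (1 : ℕ) + j - 1 = j := by omega
    have h2 : ((1 + j : ℕ) : ℝ) = (j : ℝ) + 1 := by push_cast; ring
    rw [h1, h2]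
    have : ((1 - t) : ℝ) ^ j = (-1 : ℝ) ^ j * (t - 1) ^ j := by
      rw [← neg_pow]; ring_nf
    rw [this, pow_add]
    field_simp
    ring
  have := hlog.sub hsum
  refine this.congr_deriv (Eq.symm ?_)
  have hgeom : (∑ j ∈ Finset.range r, (1 - t) ^ j) * ((1 - t) - 1) = (1 - t) ^ r - 1 :=
    geom_sum_mul (1 - t) r
  field_simp
  nlinarith [hgeom]

private lemma remainder_eq_integral (z : ℝ) (hz : 0 < z) (r : ℕ) (hr : 1 ≤ r) :
    Real.log z - ∑ i ∈ Finset.Icc 1 r, (-1 : ℝ) ^ (i + 1) / (i : ℝ) * (z - 1) ^ i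
      = ∫ t in (1 : ℝ)..z, (1 - t) ^ r / t := by
  have hpos : ∀ t ∈ Set.uIcc (1 : ℝ) z, 0 < t := by
    intro t ht
    rcases Set.mem_uIcc.1 ht with h | h
    · linarith [h.1]
    · linarith [h.1]
  have hint : IntervalIntegrable (fun t : ℝ => (1 - t) ^ r / t) MeasureTheory.volume 1 z := by
    apply ContinuousOn.intervalIntegrable
    apply ContinuousOn.div (by fun_prop) continuousOn_id
    intro t ht
    exact (hpos t ht).ne'
  have hderiv : ∀ t ∈ Set.uIcc (1 : ℝ) z, HasDerivAt (fun z : ℝ => Real.log z -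
      ∑ i ∈ Finset.Icc 1 r, (-1 : ℝ) ^ (i + 1) / (i : ℝ) * (z - 1) ^ i)
      ((1 - t) ^ r / t) t := fun t ht => hasDerivAt_remainder r t (hpos t ht)
  have := intervalIntegral.integral_eq_sub_of_hasDerivAt hderiv hint
  rw [this]
  have h1 : Real.log 1 - ∑ i ∈ Finset.Icc 1 r,
      (-1 : ℝ) ^ (i + 1) / (i : ℝ) * ((1 : ℝ) - 1) ^ i = 0 := by
    rw [Real.log_one]
    rw [Finset.sum_eq_zero]
    · ring
    intro i hi
    have : (1 : ℕ) ≤ i := (Finset.mem_Icc.1 hi).1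
    simp [zero_pow (by omega : i ≠ 0)]
  simp only [sub_self] at h1 ⊢
  rw [h1, sub_zero]

/-- For every `z > 0` and integer `r ≥ 1`, the error of the degree-`r`
Taylor expansion of `ln` at `1` satisfies
`|ln z − ∑_{i=1}^r (−1)^{i+1}(z−1)^i/i| ≤ |z−1|^r · |ln z|`. -/
theorem taylor_log_remainder_bound (z : ℝ) (hz : 0 < z) (r : ℕ) (hr : 1 ≤ r) :
    |Real.log z - ∑ i ∈ Finset.Icc 1 r, (-1 : ℝ) ^ (i + 1) / (i : ℝ) * (z - 1) ^ i|
      ≤ |z - 1| ^ r * |Real.log z| := by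
  rw [remainder_eq_integral z hz r hr]
  rcases le_or_gt 1 z with hz1 | hz1
  · -- z ≥ 1
    have hpos : ∀ t ∈ Set.Icc (1 : ℝ) z, 0 < t := fun t ht => by linarith [ht.1]
    have hint : IntervalIntegrable (fun t : ℝ => |(1 - t) ^ r / t|) MeasureTheory.volume 1 z := by
      apply ContinuousOn.intervalIntegrable
      apply ContinuousOn.abs
      apply ContinuousOn.div (by fun_prop) continuousOn_id
      intro t ht
      rw [Set.uIcc_of_le hz1] at ht
      exact (hpos t ht).ne'
    have hint2 : IntervalIntegrable (fun t : ℝ => (z - 1) ^ r * (1 / t))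
        MeasureTheory.volume 1 z := by
      apply ContinuousOn.intervalIntegrable
      apply ContinuousOn.mul continuousOn_const
      apply ContinuousOn.div continuousOn_const continuousOn_id
      intro t ht
      rw [Set.uIcc_of_le hz1] at ht
      exact (hpos t ht).ne'
    calc |∫ t in (1 : ℝ)..z, (1 - t) ^ r / t|
        ≤ ∫ t in (1 : ℝ)..z, |(1 - t) ^ r / t| := by
          exact intervalIntegral.abs_integral_le_integral_abs hz1
      _ ≤ ∫ t in (1 : ℝ)..z, (z - 1) ^ r * (1 / t) := by
          apply intervalIntegral.integral_mono_on hz1 hint hint2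
          intro t ht
          have ht0 : 0 < t := hpos t ht
          rw [abs_div, abs_pow, abs_of_pos ht0]
          rw [div_eq_mul_one_div]
          gcongr
          rw [abs_of_nonpos (by linarith [ht.1])]
          linarith [ht.2]
      _ = (z - 1) ^ r * Real.log z := by
          rw [intervalIntegral.integral_const_mul, integral_one_div (by
            intro h
            rw [Set.uIcc_of_le hz1] at h
            linarith [h.1]), div_one]
      _ ≤ |z - 1| ^ r * |Real.log z| :=
          mul_le_mul (by rw [← abs_pow]; exact le_abs_self _) (le_abs_self _)
            (Real.log_nonneg hz1) (by positivity)
  · -- z < 1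
    have hzle : z ≤ 1 := hz1.le
    have hpos : ∀ t ∈ Set.Icc z 1, 0 < t := fun t ht => by linarith [ht.1]
    rw [intervalIntegral.integral_symm z 1, abs_neg]
    have hint : IntervalIntegrable (fun t : ℝ => |(1 - t) ^ r / t|) MeasureTheory.volume z 1 := by
      apply ContinuousOn.intervalIntegrable
      apply ContinuousOn.abs
      apply ContinuousOn.div (by fun_prop) continuousOn_id
      intro t ht
      rw [Set.uIcc_of_le hzle] at ht
      exact (hpos t ht).ne'
    have hint2 : IntervalIntegrable (fun t : ℝ => (1 - z) ^ r * (1 / t))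
        MeasureTheory.volume z 1 := by
      apply ContinuousOn.intervalIntegrable
      apply ContinuousOn.mul continuousOn_const
      apply ContinuousOn.div continuousOn_const continuousOn_id
      intro t ht
      rw [Set.uIcc_of_le hzle] at ht
      exact (hpos t ht).ne'
    calc |∫ t in z..(1 : ℝ), (1 - t) ^ r / t|
        ≤ ∫ t in z..(1 : ℝ), |(1 - t) ^ r / t| := by
          exact intervalIntegral.abs_integral_le_integral_abs hzle
      _ ≤ ∫ t in z..(1 : ℝ), (1 - z) ^ r * (1 / t) := by
          apply intervalIntegral.integral_mono_on hzle hint hint2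
          intro t ht
          have ht0 : 0 < t := hpos t ht
          rw [abs_div, abs_pow, abs_of_pos ht0]
          rw [div_eq_mul_one_div]
          gcongr
          rw [abs_of_nonneg (by linarith [ht.2])]
          linarith [ht.1]
      _ = (1 - z) ^ r * (-Real.log z) := by
          rw [intervalIntegral.integral_const_mul, integral_one_div (by
            intro h
            rw [Set.uIcc_of_le hzle] at h
            linarith [h.1]), Real.log_div one_ne_zero hz.ne', Real.log_one, zero_sub]
      _ ≤ |z - 1| ^ r * |Real.log z| := by
          apply le_of_eq
          rw [abs_of_nonpos (by linarith : z - 1 ≤ 0),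
            abs_of_nonpos (Real.log_nonpos hz.le hzle)]
          ring
end

section
/- There exists a universal constant C > 0 such that for every real z > 0 and every integer r ≥ 1: |z−1|^r · |ln z| ≤ C·( |z−1|^{r+1} + (9/10)^r + 𝟙{z ≤ 1/10}·ln(1/z) ), where 𝟙{z ≤ 1/10} is 1 if z ≤ 1/10 and 0 otherwise. -/
/-- There is a universal constant `C > 0` such that for all `z > 0` and
integers `r ≥ 1`:
`|z−1|^r · |ln z| ≤ C (|z−1|^{r+1} + (9/10)^r + 𝟙{z ≤ 1/10} · ln(1/z))`. -/
theorem remainder_pointwise_bound :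
    ∃ C : ℝ, 0 < C ∧ ∀ z : ℝ, 0 < z → ∀ r : ℕ, 1 ≤ r →
      |z - 1| ^ r * |Real.log z|
        ≤ C * (|z - 1| ^ (r + 1) + (9 / 10 : ℝ) ^ r
            + (if z ≤ 1 / 10 then (1 : ℝ) else 0) * Real.log (1 / z)) := by
  refine ⟨10, by norm_num, ?_⟩
  intro z hz r hr
  have h1 : (0:ℝ) ≤ |z-1|^(r+1) := pow_nonneg (abs_nonneg _) _
  have h2 : (0:ℝ) ≤ (9/10:ℝ)^r := by positivity
  by_cases hc1 : z ≤ 1/10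
  · have hlogpos : 0 ≤ Real.log (1/z) := Real.log_nonneg (by
      rw [le_div_iff₀ hz]; linarith)
    have habs : |z - 1| ≤ 1 := by rw [abs_le]; constructor <;> linarith
    have hp : |z-1|^r ≤ 1 := pow_le_one₀ (abs_nonneg _) habs
    have hlz : |Real.log z| = Real.log (1/z) := by
      rw [one_div, Real.log_inv,
        abs_of_nonpos (Real.log_nonpos hz.le (by linarith))]
    rw [if_pos hc1, hlz]
    nlinarith [hlogpos, pow_nonneg (abs_nonneg (z-1)) r]
  · push_neg at hc1
    rw [if_neg (not_le.mpr hc1), zero_mul, add_zero]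
    by_cases hc2 : z ≤ 19/10
    · have habs : |z-1| ≤ 9/10 := by rw [abs_le]; constructor <;> linarith
      have hp : |z-1|^r ≤ (9/10:ℝ)^r := pow_le_pow_left₀ (abs_nonneg _) habs r
      have hlog : |Real.log z| ≤ 10 := by
        rcases le_or_gt 1 z with h | h
        · rw [abs_of_nonneg (Real.log_nonneg h)]
          have := Real.log_le_sub_one_of_pos hz
          linarith
        · rw [abs_of_neg (Real.log_neg hz h)]
          have h3 : Real.log z⁻¹ ≤ z⁻¹ - 1 :=
            Real.log_le_sub_one_of_pos (by positivity)
          rw [Real.log_inv] at h3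
          have h4 : z⁻¹ < 10 := by
            rw [inv_lt_comm₀ hz (by norm_num)]; linarith
          linarith
      nlinarith [pow_nonneg (abs_nonneg (z-1)) r, abs_nonneg (Real.log z)]
    · push_neg at hc2
      have hz1 : (0:ℝ) < z - 1 := by linarith
      have hlog : |Real.log z| ≤ z - 1 := by
        rw [abs_of_nonneg (Real.log_nonneg (by linarith))]
        exact Real.log_le_sub_one_of_pos hz
      have habs : |z-1| = z-1 := abs_of_pos hz1
      have key : |z-1|^r * |Real.log z| ≤ |z-1|^(r+1) := by
        rw [pow_succ, habs]
        exact mul_le_mul_of_nonneg_left hlog (pow_nonneg hz1.le r)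
      linarith
end

section
/- There exist universal constants c, C > 0 such that for every p ∈ (0,1], every integer t ≥ 1, and every real λ with |λ| ≤ c·t: Σ_{ℓ=t}^∞ C(ℓ−1,t−1)·p^t·(1−p)^{ℓ−t}·e^{λ(ℓp/t − 1)} ≤ exp( C·λ²/t ). That is, if X ~ NB(t,p) and Y = Xp/t, then Y has mean 1 and satisfies the subgamma MGF bound E[e^{λ(Y−1)}] ≤ exp(O(λ²/t)) whenever |λ| is sufficiently small relative to t. -/
set_option maxHeartbeats 1000000

lemma exp_quad_bound {x : ℝ} (hx : |x| ≤ 1) : Real.exp x ≤ 1 + x + x ^ 2 := by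
  have h := Real.exp_bound hx (n := 2) (by norm_num)
  have h2 : ∑ m ∈ Finset.range 2, x ^ m / m.factorial = 1 + x := by
    simp [Finset.sum_range_succ]
  rw [h2] at h
  have := (abs_sub_le_iff.1 h).1
  have hx2 : |x| ^ 2 = x ^ 2 := by rw [sq_abs]
  rw [hx2] at this
  norm_num [Nat.factorial] at this
  nlinarith [this, sq_nonneg x]

lemma key_ineq {p u : ℝ} (hp : 0 < p) (hp1 : p ≤ 1) (hu : |u| ≤ 1/4) :
    p ≤ (1 - (1 - p) * Real.exp (p * u)) * Real.exp ((1 - p) * u + 2 * u ^ 2) := by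
  have hau : -(1/4) ≤ u ∧ u ≤ 1/4 := abs_le.1 hu
  have hpu : |p * u| ≤ 1 := by
    rw [abs_mul, abs_of_pos hp]
    nlinarith [abs_nonneg u]
  have h1 : Real.exp (p * u) ≤ 1 + p * u + (p * u) ^ 2 := exp_quad_bound hpu
  have h3 : 1 + ((1 - p) * u + 2 * u ^ 2) ≤ Real.exp ((1 - p) * u + 2 * u ^ 2) := by
    linarith [Real.add_one_le_exp ((1 - p) * u + 2 * u ^ 2)]
  have hq : 0 ≤ 1 - p := by linarith
  have hx : 1 - (1 - p) * Real.exp (p * u) ≥ p - (1 - p) * (p * u) - (1 - p) * (p * u) ^ 2 := by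
    nlinarith [h1]
  have hu2 : u ^ 2 ≤ 1 / 16 := by nlinarith [hau.1, hau.2]
  have hqu : (1 - p) * u ≤ 1 / 4 := by
    nlinarith [mul_nonneg hq (by linarith : (0:ℝ) ≤ 1/4 - u)]
  have hqu' : -(1/4) ≤ (1 - p) * u := by
    nlinarith [mul_nonneg hq (by linarith : (0:ℝ) ≤ u + 1/4)]
  have h16 : (1 - p) * p * u ^ 2 ≤ 1 / 16 := by
    nlinarith [mul_nonneg (by nlinarith : (0:ℝ) ≤ 1 - (1 - p) * p) (sq_nonneg u)]
  have haux : (1:ℝ)/2 ≤ 1 - (1 - p) * u - (1 - p) * p * u ^ 2 := by linarith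
  have hpos : 0 < p - (1 - p) * (p * u) - (1 - p) * (p * u) ^ 2 := by
    nlinarith [mul_pos hp (show (0:ℝ) < 1 - (1 - p) * u - (1 - p) * p * u ^ 2 by linarith)]
  have hq2pu : (1 - p) ^ 2 * p * u ≤ 1 / 4 := by
    nlinarith [mul_nonneg (mul_nonneg (sq_nonneg (1 - p)) hp.le) (by linarith : (0:ℝ) ≤ 1/4 - u),
      mul_nonneg (sq_nonneg (1 - p)) hp.le, sq_nonneg (1 - p)]
  have inner : (0:ℝ) ≤ (2 - (1 - p)) - (1 - p) * u * (2 + (1 - p) * p) - 2 * (1 - p) * p * u ^ 2 := by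
    nlinarith [hqu, hqu', hq2pu, h16, hp, hp1]
  have hmain : p ≤ (p - (1 - p) * (p * u) - (1 - p) * (p * u) ^ 2) *
      (1 + ((1 - p) * u + 2 * u ^ 2)) := by
    nlinarith [mul_nonneg (mul_nonneg hp.le (sq_nonneg u)) inner]
  calc p ≤ (p - (1 - p) * (p * u) - (1 - p) * (p * u) ^ 2) *
      (1 + ((1 - p) * u + 2 * u ^ 2)) := hmain
    _ ≤ (1 - (1 - p) * Real.exp (p * u)) * Real.exp ((1 - p) * u + 2 * u ^ 2) := by
        apply mul_le_mul (by linarith) h3 (by nlinarith [hqu', sq_nonneg u]) (by linarith)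

lemma key_pos {p u : ℝ} (hp : 0 < p) (hp1 : p ≤ 1) (hu : |u| ≤ 1/4) :
    0 < 1 - (1 - p) * Real.exp (p * u) := by
  have h := key_ineq hp hp1 hu
  by_contra h'
  push_neg at h'
  nlinarith [Real.exp_pos ((1 - p) * u + 2 * u ^ 2), h]

theorem negBinomial_normalized_mgf_bound :
    ∃ c C : ℝ, 0 < c ∧ 0 < C ∧
      ∀ p ∈ Set.Ioc (0 : ℝ) 1, ∀ t : ℕ, 1 ≤ t → ∀ l : ℝ, |l| ≤ c * t →
        (∑' n : ℕ, nbPMF t p (t + n) *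
            Real.exp (l * (((t + n : ℕ) : ℝ) * p / (t : ℝ) - 1)))
          ≤ Real.exp (C * l ^ 2 / (t : ℝ)) := by
  refine ⟨1/4, 2, by norm_num, by norm_num, ?_⟩
  rintro p ⟨hp, hp1⟩ t ht l hl
  have htpos : (0 : ℝ) < t := by exact_mod_cast Nat.lt_of_lt_of_le Nat.zero_lt_one ht
  set u : ℝ := l / t with hu_def
  have hu : |u| ≤ 1/4 := by
    rw [abs_div, abs_of_pos htpos, div_le_iff₀ htpos]
    linarith [hl]
  set x : ℝ := (1 - p) * Real.exp (p * u) with hx_def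
  have hxnn : 0 ≤ x := mul_nonneg (by linarith) (Real.exp_pos _).le
  have h1x : 0 < 1 - x := key_pos hp hp1 hu
  have hx1 : ‖x‖ < 1 := by rw [Real.norm_eq_abs, abs_of_nonneg hxnn]; linarith
  have hterm : ∀ n : ℕ, nbPMF t p (t + n) *
      Real.exp (l * (((t + n : ℕ) : ℝ) * p / (t : ℝ) - 1)) =
      (p ^ t * Real.exp (l * (p - 1))) * (((n + (t - 1)).choose (t - 1) : ℝ) * x ^ n) := by
    intro n
    have e1 : t + n - 1 = n + (t - 1) := by omega
    have e2 : t + n - t = n := by omega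
    have e3 : l * (((t + n : ℕ) : ℝ) * p / (t : ℝ) - 1) = l * (p - 1) + (n : ℝ) * (p * u) := by
      rw [hu_def]
      push_cast
      field_simp
      ring
    rw [nbPMF, e1, e2, e3, Real.exp_add, Real.exp_nat_mul, hx_def, mul_pow]
    ring
  rw [tsum_congr hterm, tsum_mul_left,
    tsum_choose_mul_geometric_of_norm_lt_one (t - 1) hx1]
  have et : t - 1 + 1 = t := by omega
  rw [et]
  -- now goal : p ^ t * exp (l * (p-1)) * (1 / (1-x)^t) ≤ exp (2 * l^2 / t)
  have hperfac : p * Real.exp (u * (p - 1)) / (1 - x) ≤ Real.exp (2 * u ^ 2) := by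
    rw [div_le_iff₀ h1x]
    have hkey := key_ineq hp hp1 hu
    have hrw : Real.exp ((1 - p) * u + 2 * u ^ 2) =
        Real.exp (2 * u ^ 2) / Real.exp (u * (p - 1)) := by
      rw [← Real.exp_sub]; ring_nf
    rw [hrw] at hkey
    have hex : 0 < Real.exp (u * (p - 1)) := Real.exp_pos _
    rw [← mul_div_assoc, le_div_iff₀ hex] at hkey
    rw [← hx_def] at hkey
    linarith [hkey]
  have hLHS : p ^ t * Real.exp (l * (p - 1)) * (1 / (1 - x) ^ t) =
      (p * Real.exp (u * (p - 1)) / (1 - x)) ^ t := by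
    rw [div_pow, mul_pow, ← Real.exp_nat_mul]
    have : (t : ℝ) * (u * (p - 1)) = l * (p - 1) := by
      rw [hu_def]; field_simp; try ring
    rw [this]
    field_simp
  have hRHS : Real.exp (2 * l ^ 2 / (t : ℝ)) = Real.exp (2 * u ^ 2) ^ t := by
    rw [← Real.exp_nat_mul]
    congr 1
    rw [hu_def]
    field_simp
    try ring
  rw [hLHS, hRHS]
  apply pow_le_pow_left₀ _ hperfac
  positivity
end

section
/- There exist a constant c > 0 and an integer t₀ ≥ 1 such that for every integer t ≥ t₀ and every p ∈ (0, 1/10]: Σ_{ℓ=t}^{⌊t/(10p)⌋} C(ℓ−1,t−1)·p^t·(1−p)^{ℓ−t}·( t/(ℓp) ) ≤ e^{−c·t}. That is, if X ~ NB(t,p) and Y = Xp/t, then E[ 𝟙{Y ≤ 1/10} / Y ] ≤ exp(−Ω(t)). -/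
/-- `t^(t-1)/(t-1)! ≤ e^t`, a single term of the exponential series. -/
lemma pow_div_factorial_le_exp (t : ℕ) (ht : 1 ≤ t) :
    (t : ℝ) ^ (t - 1) / (Nat.factorial (t-1) : ℝ) ≤ Real.exp t := by
  have h := Real.sum_le_exp_of_nonneg (x := (t : ℝ)) (by positivity) (t + 1)
  refine le_trans ?_ h
  have hmem : t - 1 ∈ Finset.range (t + 1) := by
    simp [Finset.mem_range]
  exact Finset.single_le_sum (f := fun i => (t : ℝ) ^ i / (Nat.factorial i : ℝ))
    (fun i _ => by positivity) hmem

/-- There exist `c > 0` and an integer `t₀ ≥ 1` such that for every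
integer `t ≥ t₀` and every `p ∈ (0, 1/10]`:
`∑_{ℓ=t}^{⌊t/(10p)⌋} C(ℓ−1,t−1) p^t (1−p)^{ℓ−t} · (t/(ℓp)) ≤ e^{−c·t}`, i.e. for
`X ~ NB(t,p)` and `Y = Xp/t` we have `E[𝟙{Y ≤ 1/10}/Y] ≤ exp(−Ω(t))`. -/
theorem nb_lower_tail_inverse_moment_bound :
    ∃ c : ℝ, 0 < c ∧ ∃ t₀ : ℕ, 1 ≤ t₀ ∧
      ∀ t : ℕ, t₀ ≤ t → ∀ p : ℝ, p ∈ Set.Ioc (0 : ℝ) (1 / 10) →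
        (∑ ℓ ∈ Finset.Icc t ⌊(t : ℝ) / (10 * p)⌋₊,
            nbPMF t p ℓ * ((t : ℝ) / ((ℓ : ℝ) * p)))
          ≤ Real.exp (-c * (t : ℝ)) := by
  refine ⟨1/2, by norm_num, 60, by norm_num, ?_⟩
  intro t ht p hp
  obtain ⟨hp0, hp1⟩ := hp
  have ht2 : 2 ≤ t := le_trans (by norm_num) ht
  set L := ⌊(t : ℝ) / (10 * p)⌋₊ with hLdef
  have hq0 : (0:ℝ) ≤ 1 - p := by linarith
  have hq1 : 1 - p < 1 := by linarith
  have htpos : 0 < t := by omega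
  have htR : (0:ℝ) < t := by exact_mod_cast htpos
  have hfact : (0:ℝ) < (Nat.factorial (t-1) : ℝ) := by exact_mod_cast Nat.factorial_pos (t-1)
  -- the per-term bound constant
  set B : ℝ := (L:ℝ)^(t-2) * t * p^(t-1) / (Nat.factorial (t-1) : ℝ) with hBdef
  have hLnn : (0:ℝ) ≤ (L:ℝ) := by positivity
  have hBnn : 0 ≤ B := by positivity
  -- Step 1: per-term bound
  have key : ∀ ℓ ∈ Finset.Icc t L,
      nbPMF t p ℓ * ((t : ℝ) / ((ℓ : ℝ) * p)) ≤ B * (1-p)^(ℓ-t) := by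
    intro ℓ hℓ
    rw [Finset.mem_Icc] at hℓ
    obtain ⟨hℓt, hℓL⟩ := hℓ
    have hℓ2 : 2 ≤ ℓ := le_trans ht2 hℓt
    have hℓpos : 0 < ℓ := by omega
    have hℓR : (0:ℝ) < ℓ := by exact_mod_cast hℓpos
    -- choose bound
    have hc : ((ℓ - 1).choose (t - 1) : ℝ) ≤ (ℓ:ℝ)^(t-1) / (Nat.factorial (t-1) : ℝ) := by
      calc ((ℓ - 1).choose (t - 1) : ℝ) ≤ ((ℓ-1:ℕ):ℝ)^(t-1) / (Nat.factorial (t-1) : ℝ) :=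
            Nat.choose_le_pow_div (t-1) (ℓ-1)
        _ ≤ (ℓ:ℝ)^(t-1) / (Nat.factorial (t-1) : ℝ) := by
            gcongr
            exact_mod_cast Nat.sub_le ℓ 1
    have hmul : nbPMF t p ℓ * ((t : ℝ) / ((ℓ : ℝ) * p))
        ≤ ((ℓ:ℝ)^(t-1) / (Nat.factorial (t-1) : ℝ)) * p ^ t * (1 - p) ^ (ℓ - t) * ((t : ℝ) / ((ℓ : ℝ) * p)) := by
      unfold nbPMF
      have hpos : 0 ≤ p ^ t * (1 - p) ^ (ℓ - t) * ((t : ℝ) / ((ℓ : ℝ) * p)) := by positivity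
      calc ((ℓ - 1).choose (t - 1) : ℝ) * p ^ t * (1 - p) ^ (ℓ - t) * ((t : ℝ) / ((ℓ : ℝ) * p))
          = ((ℓ - 1).choose (t - 1) : ℝ) * (p ^ t * (1 - p) ^ (ℓ - t) * ((t : ℝ) / ((ℓ : ℝ) * p))) := by ring
        _ ≤ ((ℓ:ℝ)^(t-1) / (Nat.factorial (t-1) : ℝ)) * (p ^ t * (1 - p) ^ (ℓ - t) * ((t : ℝ) / ((ℓ : ℝ) * p))) := by
            exact mul_le_mul_of_nonneg_right hc hpos
        _ = ((ℓ:ℝ)^(t-1) / (Nat.factorial (t-1) : ℝ)) * p ^ t * (1 - p) ^ (ℓ - t) * ((t : ℝ) / ((ℓ : ℝ) * p)) := by ring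
    refine hmul.trans ?_
    -- simplify: ℓ^(t-1) * p^t * t / (ℓ p) = ℓ^(t-2) * p^(t-1) * t
    have hexp1 : (ℓ:ℝ)^(t-1) = (ℓ:ℝ)^(t-2) * ℓ := by
      rw [← pow_succ]; congr 1; omega
    have hexp2 : p^t = p^(t-1) * p := by
      rw [← pow_succ]; congr 1; omega
    have heq : ((ℓ:ℝ)^(t-1) / (Nat.factorial (t-1) : ℝ)) * p ^ t * (1 - p) ^ (ℓ - t) * ((t : ℝ) / ((ℓ : ℝ) * p))
        = ((ℓ:ℝ)^(t-2) * t * p^(t-1) / (Nat.factorial (t-1) : ℝ)) * (1-p)^(ℓ-t) := by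
      rw [hexp1, hexp2]
      field_simp
      try ring
    rw [heq]
    have hmono : ((ℓ:ℝ)^(t-2) * t * p^(t-1) / (Nat.factorial (t-1) : ℝ)) ≤ B := by
      rw [hBdef]
      gcongr
      try exact_mod_cast hℓL
    exact mul_le_mul_of_nonneg_right hmono (pow_nonneg hq0 _)
  -- Step 2: sum the geometric series
  have hsum : (∑ ℓ ∈ Finset.Icc t L, nbPMF t p ℓ * ((t : ℝ) / ((ℓ : ℝ) * p)))
      ≤ B * (1/p) := by
    calc (∑ ℓ ∈ Finset.Icc t L, nbPMF t p ℓ * ((t : ℝ) / ((ℓ : ℝ) * p)))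
        ≤ ∑ ℓ ∈ Finset.Icc t L, B * (1-p)^(ℓ-t) := Finset.sum_le_sum key
      _ = B * ∑ ℓ ∈ Finset.Icc t L, (1-p)^(ℓ-t) := by rw [Finset.mul_sum]
      _ ≤ B * (1/p) := by
          apply mul_le_mul_of_nonneg_left ?_ hBnn
          have hqt : (0:ℝ) < (1-p)^t := by
            have : (0:ℝ) < 1 - p := by linarith
            positivity
          have hrw : ∀ ℓ ∈ Finset.Icc t L, (1-p)^(ℓ-t) = (1-p)^ℓ / (1-p)^t := by
            intro ℓ hℓ
            rw [Finset.mem_Icc] at hℓ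
            rw [pow_sub₀ _ (by linarith : (1:ℝ)-p ≠ 0) hℓ.1]
            rfl
          rw [Finset.sum_congr rfl hrw, ← Finset.sum_div]
          rw [div_le_iff₀ hqt]
          have hIcc : Finset.Icc t L = Finset.Ico t (L+1) := by
            rw [Finset.Ico_add_one_right_eq_Icc]
          rw [hIcc]
          calc ∑ ℓ ∈ Finset.Ico t (L+1), (1-p)^ℓ ≤ (1-p)^t / (1-(1-p)) :=
                geom_sum_Ico_le_of_lt_one hq0 hq1
            _ = (1-p)^t / p := by ring_nf
            _ ≤ 1/p * (1-p)^t := by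
                rw [div_eq_mul_inv, mul_comm]
                rw [one_div]
  refine hsum.trans ?_
  -- Step 3: B/p ≤ t*(t/10)^(t-2)/(t-1)!
  have hLp : (L:ℝ) * p ≤ (t:ℝ)/10 := by
    have hfl : (L:ℝ) ≤ (t : ℝ) / (10 * p) := Nat.floor_le (by positivity)
    calc (L:ℝ) * p ≤ ((t : ℝ) / (10 * p)) * p := by
          exact mul_le_mul_of_nonneg_right hfl hp0.le
      _ = (t:ℝ)/10 := by field_simp
  have hB2 : B * (1/p) = (t:ℝ) * ((L:ℝ)*p)^(t-2) / (Nat.factorial (t-1) : ℝ) := by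
    rw [hBdef]
    have hexp2 : p^(t-1) = p^(t-2) * p := by
      rw [← pow_succ]; congr 1; omega
    rw [hexp2, mul_pow]
    field_simp
    try ring
  rw [hB2]
  have hstep3 : (t:ℝ) * ((L:ℝ)*p)^(t-2) / (Nat.factorial (t-1) : ℝ) ≤ (t:ℝ) * ((t:ℝ)/10)^(t-2) / (Nat.factorial (t-1) : ℝ) := by
    gcongr
    try positivity
  refine hstep3.trans ?_
  -- Step 4: t*(t/10)^(t-2)/(t-1)! = 100 * (t^(t-1)/(t-1)!) / 10^t ≤ 100 * e^t/10^t
  have hrw4 : (t:ℝ) * ((t:ℝ)/10)^(t-2) / (Nat.factorial (t-1) : ℝ) = 100 * ((t:ℝ)^(t-1) / (Nat.factorial (t-1) : ℝ)) / 10^t := by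
    have h1 : (t:ℝ)^(t-1) = (t:ℝ)^(t-2) * t := by
      rw [← pow_succ]; congr 1; omega
    have h2 : (10:ℝ)^t = 10^(t-2) * 100 := by
      have : t = (t-2) + 2 := by omega
      rw [this, pow_add]; norm_num
    rw [h1, h2, div_pow]
    field_simp
    try ring
  rw [hrw4]
  have hexpbd : (t:ℝ)^(t-1) / (Nat.factorial (t-1) : ℝ) ≤ Real.exp t := pow_div_factorial_le_exp t (by omega)
  have h10 : (0:ℝ) < 10^t := by positivity
  calc 100 * ((t:ℝ)^(t-1) / (Nat.factorial (t-1) : ℝ)) / 10^t ≤ 100 * Real.exp t / 10^t := by gcongr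
    _ ≤ Real.exp (-(1/2) * t) := by
        rw [div_le_iff₀ h10]
        -- 100 * e^t ≤ e^(-t/2) * 10^t  ⟺  100 * e^(3t/2) ≤ 10^t
        have hkey : 100 * Real.exp ((3/2) * t) ≤ 10^t := by
          have h32 : Real.exp ((3/2:ℝ) * t) = (Real.exp (3/2))^t := by
            rw [mul_comm, ← Real.exp_nat_mul]
          rw [h32]
          have he32 : Real.exp (3/2 : ℝ) ≤ 7.39 := by
            have h1 : Real.exp (3/2 : ℝ) ≤ Real.exp 2 := by
              apply Real.exp_le_exp.mpr; norm_num
            have h2 : Real.exp 2 = (Real.exp 1)^2 := by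
              rw [← Real.exp_nat_mul]; try norm_num
            have h3 : (Real.exp 1)^2 ≤ (2.7182818286:ℝ)^2 := by
              apply pow_le_pow_left₀ (Real.exp_pos 1).le Real.exp_one_lt_d9.le
            nlinarith
          calc 100 * (Real.exp (3/2:ℝ))^t ≤ 100 * (7.39:ℝ)^t := by
                gcongr
                try exact (Real.exp_pos _).le
            _ ≤ 10^t := by
                have hsplit : (7.39:ℝ)^t = 10^t * (739/1000:ℝ)^t := by
                  rw [← mul_pow]; try norm_num
                rw [hsplit]
                have hgeo : (739/1000:ℝ)^t ≤ (3/4:ℝ)^t := by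
                  apply pow_le_pow_left₀ (by norm_num) (by norm_num)
                have hgeo2 : (3/4:ℝ)^t ≤ (3/4:ℝ)^60 := by
                  apply pow_le_pow_of_le_one (by norm_num) (by norm_num) ht
                have hfin : (100:ℝ) * (3/4:ℝ)^60 ≤ 1 := by norm_num
                calc 100 * (10^t * (739/1000:ℝ)^t) = 10^t * (100 * (739/1000:ℝ)^t) := by ring
                  _ ≤ 10^t * (100 * (3/4:ℝ)^60) := by
                      have : (739/1000:ℝ)^t ≤ (3/4:ℝ)^60 := hgeo.trans hgeo2
                      gcongr
                  _ ≤ 10^t * 1 := by gcongr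
                  _ = 10^t := by ring
        have hsplit2 : Real.exp ((3/2:ℝ) * t) = Real.exp t * Real.exp ((1/2:ℝ) * t) := by
          rw [← Real.exp_add]; congr 1; ring
        have hepos : (0:ℝ) < Real.exp ((1/2:ℝ) * t) := Real.exp_pos _
        rw [hsplit2] at hkey
        have : Real.exp (-(1/2) * t) = (Real.exp ((1/2:ℝ) * t))⁻¹ := by
          rw [← Real.exp_neg]; congr 1; ring
        rw [this]
        rw [inv_mul_eq_div, le_div_iff₀ hepos] at *
        nlinarith [Real.exp_pos ((1/2:ℝ) * t)]
end

section
/- Let k, t ≥ 1 be integers, let p : {1,...,k} → (0,1] be a probability vector (Σ_{i=1}^k p_i = 1), and let X_max > 0 be a real number. Define D = Σ_{i=1}^k p_i · Σ_{ℓ=t}^∞ C(ℓ−1,t−1)·p_i^t·(1−p_i)^{ℓ−t}·( log₂ ℓ − log₂ min(ℓ, X_max) ). Then 0 ≤ D ≤ t·k / (X_max · ln 2). In particular, if X_max ≥ t·k/(ε·ln 2) for some ε ∈ (0,1), then 0 ≤ D ≤ ε; i.e., truncating X ~ NB(t, p_i) (with i ~ p) at X_max changes E[log₂(X/t)] by at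 most ε. -/
lemma nb_mean (t : ℕ) (ht : 1 ≤ t) (p : ℝ) (hp : p ∈ Set.Ioc (0:ℝ) 1) :
    HasSum (fun n : ℕ => nbPMF t p (t + n) * ((t + n : ℕ) : ℝ)) ((t : ℝ) / p) := by
  obtain ⟨s, rfl⟩ : ∃ s, t = s + 1 := ⟨t - 1, by omega⟩
  have hp0 : (0:ℝ) < p := hp.1
  have hx : ‖1 - p‖ < 1 := by
    rw [Real.norm_eq_abs, abs_lt]; constructor <;> linarith [hp.2]
  have H := (hasSum_choose_mul_geometric_of_norm_lt_one (s + 1) hx).mul_left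
      (((s:ℝ) + 1) * p ^ (s + 1))
  have hval : ((s:ℝ) + 1) * p ^ (s + 1) * (1 / (1 - (1 - p)) ^ (s + 1 + 1))
      = ((s + 1 : ℕ) : ℝ) / p := by
    have : (1 : ℝ) - (1 - p) = p := by ring
    rw [this, pow_succ]
    push_cast
    field_simp
    ring
  rw [hval] at H
  convert H using 1
  · rfl
  funext n
  have hnat : (s + 1 + n) * ((s + n).choose s) = ((n + (s + 1)).choose (s + 1)) * (s + 1) := by
    rw [show s + 1 + n = (s + n) + 1 by omega, show n + (s + 1) = (s + n) + 1 by omega]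
    exact Nat.add_one_mul_choose_eq (s + n) s
  have hcast : ((s + 1 + n : ℕ) : ℝ) * ((s + n).choose s : ℝ)
      = ((n + (s + 1)).choose (s + 1) : ℝ) * ((s:ℝ) + 1) := by
    exact_mod_cast congrArg (Nat.cast (R := ℝ)) hnat
  simp only [nbPMF, show s + 1 + n - 1 = s + n by omega, show s + 1 - 1 = s from rfl,
    show s + 1 + n - (s + 1) = n by omega]
  push_cast at hcast ⊢
  linear_combination (p ^ (s + 1) * (1 - p) ^ n) * hcast

lemma nb_nonneg (t : ℕ) (p : ℝ) (hp : p ∈ Set.Ioc (0:ℝ) 1) (ℓ : ℕ) : 0 ≤ nbPMF t p ℓ := by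
  unfold nbPMF
  have h1 : (0:ℝ) ≤ p := le_of_lt hp.1
  have h2 : (0:ℝ) ≤ 1 - p := by linarith [hp.2]
  positivity

/-- For a probability vector `p` on `{1,…,k}`, integer `t ≥ 1` and real
`X_max > 0`, the truncation error
`D = ∑_i p_i · E_{X ~ NB(t,p_i)}[log₂ X − log₂ min(X, X_max)]` satisfies
`0 ≤ D ≤ t·k / (X_max · ln 2)`. -/
theorem truncation_error_bound (k t : ℕ) (hk : 1 ≤ k) (ht : 1 ≤ t)
    (p : Fin k → ℝ) (hp : ∀ i, p i ∈ Set.Ioc (0 : ℝ) 1) (hsum : ∑ i, p i = 1)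
    (Xmax : ℝ) (hXmax : 0 < Xmax) :
    0 ≤ (∑ i, p i * ∑' n : ℕ, nbPMF t (p i) (t + n) *
          (Real.logb 2 ((t + n : ℕ) : ℝ)
            - Real.logb 2 (min ((t + n : ℕ) : ℝ) Xmax))) ∧
    (∑ i, p i * ∑' n : ℕ, nbPMF t (p i) (t + n) *
          (Real.logb 2 ((t + n : ℕ) : ℝ)
            - Real.logb 2 (min ((t + n : ℕ) : ℝ) Xmax)))
      ≤ (t : ℝ) * (k : ℝ) / (Xmax * Real.log 2) := by
  have hlog2 : 0 < Real.log 2 := Real.log_pos (by norm_num)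
  have htn : ∀ n : ℕ, (1:ℝ) ≤ ((t + n : ℕ) : ℝ) := by
    intro n; exact_mod_cast Nat.one_le_iff_ne_zero.mpr (by omega)
  -- nonnegativity of each expectation term
  have hf0 : ∀ i (n : ℕ), 0 ≤ nbPMF t (p i) (t + n) *
      (Real.logb 2 ((t + n : ℕ) : ℝ) - Real.logb 2 (min ((t + n : ℕ) : ℝ) Xmax)) := by
    intro i n
    apply mul_nonneg (nb_nonneg t (p i) (hp i) _)
    have hmpos : 0 < min ((t + n : ℕ) : ℝ) Xmax := lt_min (by linarith [htn n]) hXmax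
    have : Real.logb 2 (min ((t + n : ℕ) : ℝ) Xmax) ≤ Real.logb 2 ((t + n : ℕ) : ℝ) :=
      Real.logb_le_logb_of_le (by norm_num) hmpos (min_le_left _ _)
    linarith
  -- termwise upper bound
  have hfle : ∀ i (n : ℕ), nbPMF t (p i) (t + n) *
      (Real.logb 2 ((t + n : ℕ) : ℝ) - Real.logb 2 (min ((t + n : ℕ) : ℝ) Xmax))
      ≤ nbPMF t (p i) (t + n) * (((t + n : ℕ) : ℝ) / (Xmax * Real.log 2)) := by
    intro i n
    apply mul_le_mul_of_nonneg_left _ (nb_nonneg t (p i) (hp i) _)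
    set L : ℝ := ((t + n : ℕ) : ℝ) with hL
    have hL1 : (1:ℝ) ≤ L := htn n
    rcases le_or_gt L Xmax with h | h
    · rw [min_eq_left h, sub_self]
      positivity
    · rw [min_eq_right h.le]
      rw [Real.logb, Real.logb, div_sub_div_same, ← Real.log_div (by linarith) (ne_of_gt hXmax)]
      rw [div_le_div_iff₀ hlog2 (by positivity)]
      have hlog : Real.log (L / Xmax) ≤ L / Xmax := by
        have := Real.log_le_sub_one_of_pos (show 0 < L / Xmax by positivity)
        linarith
      calc Real.log (L / Xmax) * (Xmax * Real.log 2)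
          ≤ (L / Xmax) * (Xmax * Real.log 2) := by
            apply mul_le_mul_of_nonneg_right hlog (by positivity)
        _ = L * Real.log 2 := by field_simp
  -- the dominating series
  have hg : ∀ i, HasSum (fun n : ℕ => nbPMF t (p i) (t + n) * (((t + n : ℕ) : ℝ) / (Xmax * Real.log 2)))
      ((t : ℝ) / p i / (Xmax * Real.log 2)) := by
    intro i
    have := (nb_mean t ht (p i) (hp i)).div_const (Xmax * Real.log 2)
    simpa [mul_div_assoc] using this
  have hfsummable : ∀ i, Summable (fun n : ℕ => nbPMF t (p i) (t + n) *
      (Real.logb 2 ((t + n : ℕ) : ℝ) - Real.logb 2 (min ((t + n : ℕ) : ℝ) Xmax))) := by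
    intro i
    exact Summable.of_nonneg_of_le (hf0 i) (hfle i) (hg i).summable
  constructor
  · apply Finset.sum_nonneg
    intro i _
    exact mul_nonneg (le_of_lt (hp i).1) (tsum_nonneg (hf0 i))
  · have hbound : ∀ i, p i * ∑' n : ℕ, nbPMF t (p i) (t + n) *
        (Real.logb 2 ((t + n : ℕ) : ℝ) - Real.logb 2 (min ((t + n : ℕ) : ℝ) Xmax))
        ≤ (t : ℝ) / (Xmax * Real.log 2) := by
      intro i
      have h1 : ∑' n : ℕ, nbPMF t (p i) (t + n) *
          (Real.logb 2 ((t + n : ℕ) : ℝ) - Real.logb 2 (min ((t + n : ℕ) : ℝ) Xmax))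
          ≤ (t : ℝ) / p i / (Xmax * Real.log 2) := by
        rw [← (hg i).tsum_eq]
        exact Summable.tsum_le_tsum (hfle i) (hfsummable i) (hg i).summable
      have hpi := (hp i).1
      calc p i * _ ≤ p i * ((t : ℝ) / p i / (Xmax * Real.log 2)) :=
            mul_le_mul_of_nonneg_left h1 (le_of_lt hpi)
        _ = (t : ℝ) / (Xmax * Real.log 2) := by field_simp
    calc _ ≤ ∑ _i : Fin k, (t : ℝ) / (Xmax * Real.log 2) :=
          Finset.sum_le_sum (fun i _ => hbound i)
      _ = (t : ℝ) * (k : ℝ) / (Xmax * Real.log 2) := by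
          rw [Finset.sum_const, Finset.card_univ, Fintype.card_fin, nsmul_eq_mul]
          field_simp
end

section
/- Define the iterated base-2 logarithm of a real x by log^{(0)} x = x and log^{(n+1)} x = log₂(log^{(n)} x), and for an integer k ≥ 2 let log* k be the least integer n ≥ 1 with log^{(n)} k ≤ 1. Then for every δ > 0 there exists a constant C = C(δ) such that for every integer k ≥ 2, writing L = log* k: Σ_{ℓ=1}^{L−1} 1 / (log^{(ℓ)} k)^δ ≤ C. (Note that log^{(ℓ)} k > 1 for every 1 ≤ ℓ ≤ L−1, so all summands are well defined and positive.) -/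
/-- Iterated base-2 logarithm: `iterLog 0 x = x`, `iterLog (n+1) x = log₂ (iterLog n x)`. -/
noncomputable def iterLog : ℕ → ℝ → ℝ
  | 0, x => x
  | n + 1, x => Real.logb 2 (iterLog n x)

/-- For every `δ > 0` there is a constant `C = C(δ)` such that for every
integer `k ≥ 2`, with `L = log* k` (the least `n ≥ 1` with `log^{(n)} k ≤ 1`), we have
`∑_{ℓ=1}^{L−1} 1/(log^{(ℓ)} k)^δ ≤ C`. -/
theorem iterated_log_series_bounded (δ : ℝ) (hδ : 0 < δ) :
    ∃ C : ℝ, ∀ k : ℕ, 2 ≤ k → ∀ L : ℕ,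
      1 ≤ L → iterLog L (k : ℝ) ≤ 1 → (∀ n : ℕ, 1 ≤ n → n < L → 1 < iterLog n (k : ℝ)) →
      ∑ ℓ ∈ Finset.Ico 1 L, 1 / (iterLog ℓ (k : ℝ)) ^ δ ≤ C := by
  set r : ℝ := (2 : ℝ) ^ (-δ) with hrdef
  have hr0 : 0 < r := Real.rpow_pos_of_pos two_pos _
  have hr1 : r < 1 := Real.rpow_lt_one_of_one_lt_of_neg one_lt_two (neg_neg_of_pos hδ)
  have h1r : 0 < 1 - r := by linarith
  refine ⟨(1 - r)⁻¹, ?_⟩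
  intro k hk L hL hLle hlt
  -- key lower bound: iterLog n k ≥ 2^(L-1-n)
  have key : ∀ m n : ℕ, n + m + 1 = L → 1 ≤ n → ((2:ℝ)^m) ≤ iterLog n (k:ℝ) := by
    intro m
    induction m with
    | zero =>
      intro n hsum hn
      simpa using (hlt n hn (by omega)).le
    | succ m ih =>
      intro n hsum hn
      have h1 : ((2:ℝ)^m) ≤ iterLog (n+1) (k:ℝ) := ih (n+1) (by omega) (by omega)
      have hpos : 1 < iterLog n (k:ℝ) := hlt n hn (by omega)
      have heq : (2:ℝ) ^ (iterLog (n+1) (k:ℝ)) = iterLog n (k:ℝ) := by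
        show (2:ℝ) ^ (Real.logb 2 (iterLog n (k:ℝ))) = iterLog n (k:ℝ)
        exact Real.rpow_logb two_pos (by norm_num) (by linarith)
      have hmle : ((m+1 : ℕ) : ℝ) ≤ (2:ℝ)^m := by
        have := Nat.lt_two_pow_self (n := m)
        calc ((m+1 : ℕ) : ℝ) ≤ ((2^m : ℕ) : ℝ) := by exact_mod_cast this
          _ = (2:ℝ)^m := by push_cast; ring
      calc (2:ℝ)^(m+1) = (2:ℝ) ^ ((m+1 : ℕ) : ℝ) := by
            rw [Real.rpow_natCast]
        _ ≤ (2:ℝ) ^ (iterLog (n+1) (k:ℝ)) := by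
            apply Real.rpow_le_rpow_left_iff (x := (2:ℝ)) one_lt_two |>.2
            linarith
        _ = iterLog n (k:ℝ) := heq
  -- termwise bound
  have term : ∀ ℓ ∈ Finset.Ico 1 L, 1 / (iterLog ℓ (k:ℝ)) ^ δ ≤ r ^ (L - 1 - ℓ) := by
    intro ℓ hℓ
    rw [Finset.mem_Ico] at hℓ
    set j := L - 1 - ℓ with hj
    have hkey : ((2:ℝ)^j) ≤ iterLog ℓ (k:ℝ) := key j ℓ (by omega) hℓ.1
    have h2j : (0:ℝ) < (2:ℝ)^j := by positivity
    have hrp : ((2:ℝ)^j) ^ δ ≤ (iterLog ℓ (k:ℝ)) ^ δ :=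
      Real.rpow_le_rpow (le_of_lt h2j) hkey (le_of_lt hδ)
    have hrppos : (0:ℝ) < ((2:ℝ)^j) ^ δ := Real.rpow_pos_of_pos h2j _
    have h1 : 1 / (iterLog ℓ (k:ℝ)) ^ δ ≤ 1 / ((2:ℝ)^j) ^ δ :=
      one_div_le_one_div_of_le hrppos hrp
    have h2 : 1 / ((2:ℝ)^j) ^ δ = r ^ j := by
      rw [hrdef, ← Real.rpow_natCast (2:ℝ) j, ← Real.rpow_mul (by norm_num),
        ← Real.rpow_natCast ((2:ℝ) ^ (-δ)) j, ← Real.rpow_mul (by norm_num),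
        one_div, ← Real.rpow_neg (by norm_num)]
      ring_nf
    linarith [h1, h2.le, h2.ge]
  have hsum : ∑ ℓ ∈ Finset.Ico 1 L, 1 / (iterLog ℓ (k:ℝ)) ^ δ
      ≤ ∑ ℓ ∈ Finset.Ico 1 L, r ^ (L - 1 - ℓ) := Finset.sum_le_sum term
  have hre : ∑ ℓ ∈ Finset.Ico 1 L, r ^ (L - 1 - ℓ) = ∑ j ∈ Finset.range (L-1), r ^ j := by
    apply Finset.sum_nbij' (fun ℓ => L - 1 - ℓ) (fun j => L - 1 - j)
    · intro a ha; rw [Finset.mem_Ico] at ha; simp only [Finset.mem_range]; omega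
    · intro a ha; rw [Finset.mem_range] at ha; rw [Finset.mem_Ico]; omega
    · intro a ha; rw [Finset.mem_Ico] at ha; omega
    · intro a ha; rw [Finset.mem_range] at ha; omega
    · intro a ha; rfl
  have hgeom : ∑ j ∈ Finset.range (L-1), r ^ j ≤ (1 - r)⁻¹ := by
    rw [geom_sum_eq (ne_of_lt hr1)]
    rw [div_le_iff_of_neg (by linarith : r - 1 < 0)]
    have : (0:ℝ) ≤ r ^ (L-1) := by positivity
    have hinv : (1 - r)⁻¹ * (1 - r) = 1 := inv_mul_cancel₀ (ne_of_gt h1r)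
    nlinarith [hinv]
  calc ∑ ℓ ∈ Finset.Ico 1 L, 1 / (iterLog ℓ (k:ℝ)) ^ δ
      ≤ ∑ ℓ ∈ Finset.Ico 1 L, r ^ (L - 1 - ℓ) := hsum
    _ = ∑ j ∈ Finset.range (L-1), r ^ j := hre
    _ ≤ (1 - r)⁻¹ := hgeom
end

section
/- For all integers r ≥ 2 and j with 1 ≤ j ≤ r, the number r!·Σ_{i=j}^r C(i,j)/i is a positive integer, and it is at most r^{2r+1}. Consequently, the j-th coefficient Σ_{i=j}^r C(i,j)·(−1)^{j−1}/i of the degree-r Taylor polynomial of log z at 1 (written in the monomial basis z^j) is a rational number whose numerator and denominator can be represented with O(r log r) bits. -/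
/-- For integers `r ≥ 2` and `1 ≤ j ≤ r`, the number
`r! · ∑_{i=j}^r C(i,j)/i` is a positive integer of size at most `r^{2r+1}`. -/
theorem taylor_coefficient_bit_complexity (r j : ℕ) (hr : 2 ≤ r) (hj1 : 1 ≤ j)
    (hj2 : j ≤ r) :
    ∃ N : ℕ, 0 < N ∧
      ((r.factorial : ℚ) * ∑ i ∈ Finset.Icc j r, (i.choose j : ℚ) / (i : ℚ)
        = (N : ℚ)) ∧
      N ≤ r ^ (2 * r + 1) := by
  refine ⟨∑ i ∈ Finset.Icc j r, (r.factorial / i) * i.choose j, ?_, ?_, ?_⟩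
  · apply Finset.sum_pos' (fun i _ => Nat.zero_le _)
    refine ⟨j, Finset.mem_Icc.mpr ⟨le_refl j, hj2⟩, ?_⟩
    have : 0 < r.factorial / j :=
      Nat.div_pos (Nat.le_of_dvd r.factorial_pos (Nat.dvd_factorial hj1 hj2))
        (by omega)
    simp [Nat.choose_self, this]
  · rw [Finset.mul_sum, Nat.cast_sum]
    apply Finset.sum_congr rfl
    intro i hi
    obtain ⟨hi1, hi2⟩ := Finset.mem_Icc.mp hi
    have hipos : 0 < i := lt_of_lt_of_le hj1 hi1
    have hdvd : i ∣ r.factorial := Nat.dvd_factorial hipos hi2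
    have hine : (i : ℚ) ≠ 0 := by exact_mod_cast hipos.ne'
    rw [Nat.cast_mul, Nat.cast_div hdvd hine]
    field_simp
  · calc ∑ i ∈ Finset.Icc j r, (r.factorial / i) * i.choose j
        ≤ ∑ _i ∈ Finset.Icc j r, r ^ r * r ^ r := by
          apply Finset.sum_le_sum
          intro i hi
          obtain ⟨hi1, hi2⟩ := Finset.mem_Icc.mp hi
          have h1 : r.factorial / i ≤ r ^ r :=
            le_trans (Nat.div_le_self _ _) r.factorial_le_pow
          have h2 : i.choose j ≤ r ^ r :=
            le_trans (Nat.choose_le_pow i j)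
              (le_trans (Nat.pow_le_pow_left hi2 j) (Nat.pow_le_pow_right (by omega) hj2))
          exact Nat.mul_le_mul h1 h2
      _ ≤ r * (r ^ r * r ^ r) := by
          rw [Finset.sum_const, smul_eq_mul]
          apply Nat.mul_le_mul_right
          simp [Nat.card_Icc]
          omega
      _ = r ^ (2 * r + 1) := by ring
end
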